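/- arXiv:1901.11331 — 13 statements merged into one kernel-verified Lean document; each statement's English description precedes it below -/
import Mathlib

section
/- Let E be a real inner product space and φ: E → ℝ a differentiable strictly convex function, with Bregman divergence d_φ(x, θ) = φ(x) − φ(θ) − ⟨x − θ, ∇φ(θ)⟩. Let f: [0, ∞) → ℝ be differentiable, monotone nondecreasing and concave. Let x_1, …, x_n ∈ E and θ ∈ E, set w_i = f'(d_φ(x_i, θ)) for each i, and suppose Σ_{i=1}^n w_i > 0. Define the updated center θ̃ = (Σ_{i=1}^n w_i x_i) / (Σ_{j=1}^n w_j). Then Σ_{i=1}^n f(d_φ(x_i, θ̃)) ≤ Σ_{i=1}^n f(d_φ(x_i, θ)); that is, the weighted-mean update of the cluster center monotonically decreases the f-separable objective. -/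
open scoped RealInnerProductSpace


/-- Tangent-line bound for a concave differentiable function on `[0,∞)`. -/
lemma concave_tangent_le {f : ℝ → ℝ} (hfdiff : DifferentiableOn ℝ f (Set.Ici 0))
    (hfconc : ConcaveOn ℝ (Set.Ici 0) f) {a b : ℝ} (ha : 0 ≤ a) (hb : 0 ≤ b) :
    f b ≤ f a + derivWithin f (Set.Ici 0) a * (b - a) := by
  rcases lt_trichotomy a b with h | h | h
  · have := hfconc.slope_le_derivWithin ha hb h (hfdiff a ha)
    rw [slope_def_field] at this
    have hba : 0 < b - a := by linarith
    nlinarith [(div_le_iff₀ hba).mp this]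
  · simp [h]
  · have := hfconc.derivWithin_le_slope hb ha h (hfdiff a ha)
    rw [slope_def_field] at this
    have hab : 0 < a - b := by linarith
    nlinarith [(le_div_iff₀ hab).mp this]

/-- Convexity gradient inequality / Bregman nonnegativity. -/
lemma bregman_nonneg {E : Type*} [NormedAddCommGroup E] [InnerProductSpace ℝ E]
    [CompleteSpace E] {φ : E → ℝ} (hφdiff : Differentiable ℝ φ)
    (hφconv : ConvexOn ℝ Set.univ φ) (x θ : E) :
    0 ≤ φ x - φ θ - ⟪x - θ, gradient φ θ⟫ := by
  set g : ℝ → ℝ := fun t => φ (θ + t • (x - θ)) with hg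
  have hline : ∀ t : ℝ, HasDerivAt (fun s : ℝ => θ + s • (x - θ)) (x - θ) t := by
    intro t
    simpa using ((hasDerivAt_id t).smul_const (x - θ)).const_add θ
  have hgd : ∀ t : ℝ, HasDerivAt g (fderiv ℝ φ (θ + t • (x - θ)) (x - θ)) t := by
    intro t
    exact (hφdiff _).hasFDerivAt.comp_hasDerivAt t (hline t)
  have hgc : ConvexOn ℝ Set.univ g := by
    have h := hφconv.comp_affineMap (AffineMap.lineMap θ x)
    have heq : (φ ∘ (AffineMap.lineMap θ x)) = g := by
      funext t
      simp [hg, AffineMap.lineMap_apply, add_comm]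
    rw [heq] at h
    simpa using h
  have h01 := hgc.le_slope_of_hasDerivAt (Set.mem_univ (0:ℝ)) (Set.mem_univ (1:ℝ))
    one_pos (by simpa using hgd 0)
  have hfd : fderiv ℝ φ θ (x - θ) = ⟪x - θ, gradient φ θ⟫ := by
    have h := (hφdiff θ).hasGradientAt
    rw [hasGradientAt_iff_hasFDerivAt] at h
    rw [h.fderiv]
    simp [real_inner_comm]
  rw [slope_def_field] at h01
  have e1 : g 1 = φ x := by simp [hg]
  have e0 : g 0 = φ θ := by simp [hg]
  rw [map_sub] at hfd
  rw [hfd] at h01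
  norm_num at h01
  linarith

/-- The Bregman divergence `d_φ(x, θ) = φ(x) − φ(θ) − ⟨x − θ, ∇φ(θ)⟩`. -/
noncomputable def bregman {E : Type*} [NormedAddCommGroup E] [InnerProductSpace ℝ E]
    [CompleteSpace E] (φ : E → ℝ) (x θ : E) : ℝ :=
  φ x - φ θ - ⟪x - θ, gradient φ θ⟫

/-- The weighted-mean update of the cluster center, with weights
`w_i = f'(d_φ(x_i, θ))`, monotonically decreases the `f`-separable objective
when `f` is differentiable, nondecreasing and concave on `[0, ∞)`. -/
theorem weighted_mean_update_decreases_f_separable_objective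
    {E : Type*} [NormedAddCommGroup E] [InnerProductSpace ℝ E] [CompleteSpace E]
    (φ : E → ℝ) (hφdiff : Differentiable ℝ φ)
    (hφconv : StrictConvexOn ℝ Set.univ φ)
    (f : ℝ → ℝ) (hfdiff : DifferentiableOn ℝ f (Set.Ici 0))
    (hfmono : MonotoneOn f (Set.Ici 0)) (hfconc : ConcaveOn ℝ (Set.Ici 0) f)
    (n : ℕ) (x : Fin n → E) (θ : E)
    (w : Fin n → ℝ)
    (hw : ∀ i, w i = derivWithin f (Set.Ici 0) (bregman φ (x i) θ))
    (hwpos : 0 < ∑ i, w i)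
    (θnew : E) (hθnew : θnew = (∑ i, w i)⁻¹ • ∑ i, w i • x i) :
    ∑ i, f (bregman φ (x i) θnew) ≤ ∑ i, f (bregman φ (x i) θ) := by
  have hconv : ConvexOn ℝ Set.univ φ := hφconv.convexOn
  have hbnn : ∀ (y θ' : E), 0 ≤ bregman φ y θ' := fun y θ' =>
    bregman_nonneg hφdiff hconv y θ'
  have hsum : ∑ i, w i • x i = (∑ i, w i) • θnew := by
    rw [hθnew, smul_inv_smul₀ hwpos.ne']
  -- Key Bregman identity: total decrease equals (∑ w) * bregman φ θnew θ
  have hkey : ∑ i, (w i * bregman φ (x i) θ - w i * bregman φ (x i) θnew)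
      = (∑ i, w i) * bregman φ θnew θ := by
    have e1 : ∀ i ∈ Finset.univ, w i * bregman φ (x i) θ - w i * bregman φ (x i) θnew
        = (⟪w i • x i, gradient φ θnew⟫ - ⟪w i • x i, gradient φ θ⟫)
          + w i * ((φ θnew - φ θ) + (⟪θ, gradient φ θ⟫ - ⟪θnew, gradient φ θnew⟫)) := by
      intro i _
      simp only [bregman, inner_sub_left, real_inner_smul_left]
      ring
    rw [Finset.sum_congr rfl e1, Finset.sum_add_distrib, Finset.sum_sub_distrib,
      ← sum_inner, ← sum_inner, hsum, ← Finset.sum_mul]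
    simp only [bregman, inner_sub_left, real_inner_smul_left]
    ring
  have hdec : ∑ i, w i * bregman φ (x i) θnew ≤ ∑ i, w i * bregman φ (x i) θ := by
    have h0 : 0 ≤ (∑ i, w i) * bregman φ θnew θ :=
      mul_nonneg hwpos.le (hbnn θnew θ)
    rw [← hkey, Finset.sum_sub_distrib] at h0
    linarith
  calc ∑ i, f (bregman φ (x i) θnew)
      ≤ ∑ i, (f (bregman φ (x i) θ)
          + w i * (bregman φ (x i) θnew - bregman φ (x i) θ)) := by
        refine Finset.sum_le_sum fun i _ => ?_
        rw [hw i]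
        exact concave_tangent_le hfdiff hfconc (hbnn (x i) θ) (hbnn (x i) θnew)
    _ = ∑ i, f (bregman φ (x i) θ)
          + (∑ i, w i * bregman φ (x i) θnew - ∑ i, w i * bregman φ (x i) θ) := by
        rw [Finset.sum_add_distrib]
        congr 1
        rw [← Finset.sum_sub_distrib]
        exact Finset.sum_congr rfl fun i _ => by ring
    _ ≤ ∑ i, f (bregman φ (x i) θ) := by linarith
end

section
/- Let E be a real inner product space, φ: E → ℝ a differentiable strictly convex function with Bregman divergence d_φ, and f: [0, ∞) → ℝ differentiable, monotone nondecreasing and concave. Let x_1, …, x_n ∈ E, θ ∈ E, w_i = f'(d_φ(x_i, θ)), Σ_i w_i > 0, and θ̃ = (Σ_i w_i x_i)/(Σ_j w_j). Then the decrease of the objective is bounded below as: Σ_{i=1}^n f(d_φ(x_i, θ)) − Σ_{i=1}^n f(d_φ(x_i, θ̃)) ≥ d_φ(θ̃, θ) · Σ_{i=1}^n w_i ≥ 0. -/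
open scoped RealInnerProductSpace

section Aux

variable {E : Type*} [NormedAddCommGroup E] [InnerProductSpace ℝ E] [CompleteSpace E]

lemma aux_hasDerivAt_line (φ : E → ℝ) (hφdiff : Differentiable ℝ φ) (θ v : E) (t : ℝ) :
    HasDerivAt (fun s : ℝ => φ (θ + s • v)) ⟪v, gradient φ (θ + t • v)⟫ t := by
  have hline : HasDerivAt (fun s : ℝ => θ + s • v) v t := by
    simpa using ((hasDerivAt_id t).smul_const v).const_add θ
  have hF := (hφdiff (θ + t • v)).hasGradientAt
  rw [hasGradientAt_iff_hasFDerivAt] at hF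
  have := hF.comp_hasDerivAt t hline
  simpa [InnerProductSpace.toDual_apply_apply, real_inner_comm, Function.comp_def] using this

lemma aux_bregman_nonneg (φ : E → ℝ) (hφdiff : Differentiable ℝ φ)
    (hφconv : ConvexOn ℝ Set.univ φ) (a θ : E) : 0 ≤ bregman φ a θ := by
  set g : ℝ → ℝ := φ ∘ (AffineMap.lineMap θ a : ℝ →ᵃ[ℝ] E) with hg
  have hgconv : ConvexOn ℝ Set.univ g := by
    have := hφconv.comp_affineMap (AffineMap.lineMap θ a : ℝ →ᵃ[ℝ] E)
    simpa [hg] using this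
  have hd : HasDerivAt g ⟪a - θ, gradient φ θ⟫ 0 := by
    have := aux_hasDerivAt_line φ hφdiff θ (a - θ) 0
    simp only [zero_smul, add_zero] at this
    apply this.congr_of_eventuallyEq
    filter_upwards with t
    simp [hg, AffineMap.lineMap_apply]
    rw [add_comm]
  have := hgconv.le_slope_of_hasDerivAt (Set.mem_univ 0) (Set.mem_univ 1) one_pos hd
  rw [slope_def_field] at this
  simp only [hg, Function.comp, AffineMap.lineMap_apply, vsub_eq_sub, vadd_eq_add] at this
  simp only [bregman]
  have h0 : (0:ℝ) • (a - θ) + θ = θ := by simp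
  have h1 : (1:ℝ) • (a - θ) + θ = a := by simp
  rw [h0, h1] at this
  linarith [this]

lemma aux_tangent (f : ℝ → ℝ) (hfdiff : DifferentiableOn ℝ f (Set.Ici 0))
    (hfconc : ConcaveOn ℝ (Set.Ici 0) f) {a z : ℝ} (ha : a ∈ Set.Ici (0:ℝ))
    (hz : z ∈ Set.Ici (0:ℝ)) :
    f z - f a ≤ derivWithin f (Set.Ici 0) a * (z - a) := by
  rcases lt_trichotomy a z with h | h | h
  · have := hfconc.slope_le_derivWithin ha hz h (hfdiff a ha)
    rw [slope_def_field] at this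
    have hpos : 0 < z - a := by linarith
    calc f z - f a = (f z - f a) / (z - a) * (z - a) := by field_simp
      _ ≤ derivWithin f (Set.Ici 0) a * (z - a) := by
          exact mul_le_mul_of_nonneg_right this hpos.le
  · simp [h]
  · have := hfconc.derivWithin_le_slope hz ha h (hfdiff a ha)
    rw [slope_def_field] at this
    have hpos : 0 < a - z := by linarith
    have h2 : derivWithin f (Set.Ici 0) a * (a - z) ≤ f a - f z := by
      calc derivWithin f (Set.Ici 0) a * (a - z) ≤ (f a - f z) / (a - z) * (a - z) :=
            mul_le_mul_of_nonneg_right this hpos.le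
        _ = f a - f z := by field_simp
    nlinarith

lemma aux_deriv_nonneg (f : ℝ → ℝ) (hfdiff : DifferentiableOn ℝ f (Set.Ici 0))
    (hfmono : MonotoneOn f (Set.Ici 0)) {a : ℝ} (ha : a ∈ Set.Ici (0:ℝ)) :
    0 ≤ derivWithin f (Set.Ici 0) a := by
  have hder := (hfdiff a ha).hasDerivWithinAt
  have htend := hasDerivWithinAt_iff_tendsto_slope.mp hder
  have hne : (nhdsWithin a (Set.Ici 0 \ {a})).NeBot := by
    refine Filter.neBot_of_le (f := nhdsWithin a (Set.Ioi a)) ?_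
    apply nhdsWithin_mono
    intro t ht
    exact ⟨Set.mem_Ici.mpr (le_trans (Set.mem_Ici.mp ha) (le_of_lt (Set.mem_Ioi.mp ht))), ne_of_gt (Set.mem_Ioi.mp ht)⟩
  refine ge_of_tendsto htend ?_
  filter_upwards [self_mem_nhdsWithin] with t ht
  obtain ⟨ht0, hta⟩ := ht
  rw [slope_def_field]
  rcases lt_or_gt_of_ne (Ne.symm hta) with h | h
  · -- a < t
    have : f a ≤ f t := hfmono ha ht0 h.le
    have : 0 ≤ f t - f a := by linarith
    exact div_nonneg this (by linarith)
  · -- t < a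
    have : f t ≤ f a := hfmono ht0 ha h.le
    rw [show (f t - f a) / (t - a) = (f a - f t) / (a - t) by
      rw [← neg_div_neg_eq]; ring_nf]
    exact div_nonneg (by linarith) (by linarith)

lemma aux_three_point (φ : E → ℝ) (a θ θ' : E) :
    bregman φ a θ - bregman φ a θ' =
      bregman φ θ' θ + ⟪a - θ', gradient φ θ' - gradient φ θ⟫ := by
  simp only [bregman, inner_sub_left, inner_sub_right]
  ring

end Aux

/-- The decrease of the `f`-separable objective under the weighted-mean update is
bounded below by `d_φ(θ̃, θ) · Σ_i w_i ≥ 0`. -/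
theorem f_separable_objective_decrease_lower_bound
    {E : Type*} [NormedAddCommGroup E] [InnerProductSpace ℝ E] [CompleteSpace E]
    (φ : E → ℝ) (hφdiff : Differentiable ℝ φ)
    (hφconv : StrictConvexOn ℝ Set.univ φ)
    (f : ℝ → ℝ) (hfdiff : DifferentiableOn ℝ f (Set.Ici 0))
    (hfmono : MonotoneOn f (Set.Ici 0)) (hfconc : ConcaveOn ℝ (Set.Ici 0) f)
    (n : ℕ) (x : Fin n → E) (θ : E)
    (w : Fin n → ℝ)
    (hw : ∀ i, w i = derivWithin f (Set.Ici 0) (bregman φ (x i) θ))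
    (hwpos : 0 < ∑ i, w i)
    (θnew : E) (hθnew : θnew = (∑ i, w i)⁻¹ • ∑ i, w i • x i) :
    bregman φ θnew θ * ∑ i, w i ≤
      (∑ i, f (bregman φ (x i) θ)) - ∑ i, f (bregman φ (x i) θnew) ∧
    0 ≤ bregman φ θnew θ * ∑ i, w i := by
  have hconv := hφconv.convexOn
  have hBnn : ∀ (a b : E), 0 ≤ bregman φ a b := fun a b =>
    aux_bregman_nonneg φ hφdiff hconv a b
  set s := ∑ i, w i with hs
  have hs0 : s ≠ 0 := ne_of_gt hwpos
  -- the barycenter identity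
  have hbar : ∑ i, w i • x i = s • θnew := by
    rw [hθnew, smul_smul, mul_inv_cancel₀ hs0, one_smul]
  set B := bregman φ θnew θ with hB
  have hBnonneg : 0 ≤ B := hBnn θnew θ
  constructor
  · -- main inequality
    set G := gradient φ θnew - gradient φ θ with hG
    -- per-term tangent inequality
    have hterm : ∀ i, w i * (bregman φ (x i) θ - bregman φ (x i) θnew) ≤
        f (bregman φ (x i) θ) - f (bregman φ (x i) θnew) := by
      intro i
      have h := aux_tangent f hfdiff hfconc (hBnn (x i) θ) (hBnn (x i) θnew)
      rw [← hw i] at h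
      linarith
    have hsum : ∑ i, w i * (bregman φ (x i) θ - bregman φ (x i) θnew) ≤
        (∑ i, f (bregman φ (x i) θ)) - ∑ i, f (bregman φ (x i) θnew) := by
      rw [← Finset.sum_sub_distrib]
      exact Finset.sum_le_sum fun i _ => hterm i
    refine le_trans ?_ hsum
    have h3 : ∀ i, w i * (bregman φ (x i) θ - bregman φ (x i) θnew) =
        w i * B + ⟪w i • (x i - θnew), G⟫ := by
      intro i
      rw [aux_three_point φ (x i) θ θnew, real_inner_smul_left]
      ring
    rw [Finset.sum_congr rfl fun i _ => h3 i, Finset.sum_add_distrib, ← Finset.sum_mul,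
      ← sum_inner]
    have hzero : ∑ i, w i • (x i - θnew) = 0 := by
      simp only [smul_sub, Finset.sum_sub_distrib]
      rw [hbar, ← Finset.sum_smul, ← hs, sub_self]
    rw [hzero, inner_zero_left, add_zero, mul_comm]
  · exact mul_nonneg hBnonneg hwpos.le
end

section
/- Let E be a finite-dimensional real inner product space, φ: E → ℝ twice differentiable and strictly convex with Bregman divergence d_φ, and f: [0, ∞) → ℝ differentiable. Let x_1, …, x_n ∈ E, θ ∈ E, and w_i = f'(d_φ(x_i, θ)). If Σ_{i=1}^n w_i ≠ 0 and θ = (Σ_i w_i x_i)/(Σ_j w_j) (i.e. θ satisfies the weighted-mean fixed-point condition), then the gradient of the objective θ' ↦ Σ_{i=1}^n f(d_φ(x_i, θ')) vanishes at θ' = θ; that is, θ is a stationary point of the f-separable objective. -/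
open scoped RealInnerProductSpace

section Aux

variable {E : Type*} [NormedAddCommGroup E] [InnerProductSpace ℝ E] [CompleteSpace E]

/-- Differentiable convex functions lie above their tangent planes:
the Bregman divergence is nonnegative. -/
lemma bregman_nonneg_aux (φ : E → ℝ) (hφdiff : Differentiable ℝ φ)
    (hφconv : ConvexOn ℝ Set.univ φ) (y t : E) : 0 ≤ bregman φ y t := by
  set g := gradient φ with hg
  have hφt : HasFDerivAt φ (InnerProductSpace.toDual ℝ E (g t)) t :=
    (hφdiff t).hasGradientAt.hasFDerivAt
  set ψ : ℝ → ℝ := fun s => φ (AffineMap.lineMap t y s) with hψ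
  have hψconv : ConvexOn ℝ Set.univ ψ := by
    have := hφconv.comp_affineMap (AffineMap.lineMap t y : ℝ →ᵃ[ℝ] E)
    simpa [hψ, Set.preimage_univ, Function.comp_def] using this
  have hline : HasDerivAt (fun s : ℝ => (AffineMap.lineMap t y : ℝ →ᵃ[ℝ] E) s) (y - t) 0 := by
    have h1 : HasDerivAt (fun s : ℝ => s • (y - t) + t) ((1 : ℝ) • (y - t)) 0 :=
      ((hasDerivAt_id (0 : ℝ)).smul_const (y - t)).add_const t
    simpa [AffineMap.lineMap_apply] using h1
  have hψder : HasDerivAt ψ (⟪g t, y - t⟫) 0 := by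
    have h0 : (AffineMap.lineMap t y : ℝ →ᵃ[ℝ] E) (0 : ℝ) = t := by
      simp [AffineMap.lineMap_apply]
    have := hφt.comp_hasDerivAt_of_eq 0 hline h0.symm
    simpa [hψ, Function.comp_def, InnerProductSpace.toDual_apply_apply] using this
  have hle : ⟪g t, y - t⟫ ≤ slope ψ 0 1 :=
    hψconv.le_slope_of_hasDerivAt (Set.mem_univ 0) (Set.mem_univ 1) zero_lt_one hψder
  have hslope : slope ψ 0 1 = φ y - φ t := by
    simp [slope_def_field, hψ, AffineMap.lineMap_apply]
  rw [hslope] at hle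
  have : ⟪y - t, g t⟫ ≤ φ y - φ t := by rwa [real_inner_comm]
  simp only [bregman, ← hg]
  linarith

end Aux

/-- If `θ` satisfies the weighted-mean fixed-point condition
`θ = (Σ_i w_i x_i)/(Σ_j w_j)` with `w_i = f'(d_φ(x_i, θ))`, then `θ` is a
stationary point of the `f`-separable objective `θ' ↦ Σ_i f(d_φ(x_i, θ'))`. -/
theorem weighted_mean_fixed_point_is_stationary
    {E : Type*} [NormedAddCommGroup E] [InnerProductSpace ℝ E] [FiniteDimensional ℝ E]
    (φ : E → ℝ) (hφdiff : Differentiable ℝ φ)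
    (hφdiff2 : Differentiable ℝ (gradient φ))
    (hφconv : StrictConvexOn ℝ Set.univ φ)
    (f : ℝ → ℝ) (hfdiff : DifferentiableOn ℝ f (Set.Ici 0))
    (n : ℕ) (x : Fin n → E) (θ : E)
    (w : Fin n → ℝ)
    (hw : ∀ i, w i = derivWithin f (Set.Ici 0) (bregman φ (x i) θ))
    (hwsum : ∑ i, w i ≠ 0)
    (hfix : θ = (∑ i, w i)⁻¹ • ∑ i, w i • x i) :
    HasGradientAt (fun t : E => ∑ i, f (bregman φ (x i) t)) 0 θ := by
  set g := gradient φ with hg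
  set H := fderiv ℝ g θ with hH
  have hgd : HasFDerivAt g H θ := (hφdiff2 θ).hasFDerivAt
  have hφθ : ∀ t : E, HasFDerivAt φ (InnerProductSpace.toDual ℝ E (g t)) t :=
    fun t => (hφdiff t).hasGradientAt.hasFDerivAt
  have hnn : ∀ (y t : E), 0 ≤ bregman φ y t :=
    fun y t => bregman_nonneg_aux φ hφdiff hφconv.convexOn y t
  -- derivative of the Bregman divergence in its second argument
  set D : Fin n → (E →L[ℝ] ℝ) := fun i => -((innerSL ℝ (x i - θ)).comp H) with hD
  have hbderiv : ∀ i, HasFDerivAt (fun t => bregman φ (x i) t) (D i) θ := by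
    intro i
    have hsub : HasFDerivAt (fun t : E => x i - t) (-(ContinuousLinearMap.id ℝ E)) θ :=
      (hasFDerivAt_id θ).const_sub (x i)
    have hinner := hsub.inner ℝ hgd
    have htotal := ((hasFDerivAt_const (φ (x i)) θ).sub (hφθ θ)).sub hinner
    refine htotal.congr_fderiv ?_
    ext v
    simp [hD, fderivInnerCLM_apply, InnerProductSpace.toDual_apply_apply, inner_sub_left,
      inner_neg_left, real_inner_comm]
    try ring
  -- derivative of each summand, by the chain rule through `f`
  have hcomp : ∀ i, HasFDerivAt (fun t => f (bregman φ (x i) t))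
      (((ContinuousLinearMap.id ℝ ℝ).smulRight (w i)).comp (D i)) θ := by
    intro i
    have hmem : bregman φ (x i) θ ∈ Set.Ici (0 : ℝ) := hnn (x i) θ
    have hfd : HasDerivWithinAt f (w i) (Set.Ici 0) (bregman φ (x i) θ) := by
      rw [hw i]
      exact (hfdiff _ hmem).hasDerivWithinAt
    have hmaps : Set.MapsTo (fun t => bregman φ (x i) t) Set.univ (Set.Ici 0) :=
      fun t _ => hnn (x i) t
    have := hfd.hasFDerivWithinAt.comp θ ((hbderiv i).hasFDerivWithinAt) hmaps
    rw [hasFDerivWithinAt_univ] at this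
    exact this
  -- sum the derivatives
  have hsum : HasFDerivAt (fun t : E => ∑ i, f (bregman φ (x i) t))
      (∑ i, ((ContinuousLinearMap.id ℝ ℝ).smulRight (w i)).comp (D i)) θ :=
    HasFDerivAt.fun_sum fun i _ => hcomp i
  -- the weighted-mean condition makes the total derivative vanish
  have hcenter : ∑ i, w i • (x i - θ) = 0 := by
    have hS : (∑ i, w i) • θ = ∑ i, w i • x i := by
      rw [hfix, smul_inv_smul₀ hwsum]
    calc ∑ i, w i • (x i - θ) = (∑ i, w i • x i) - (∑ i, w i) • θ := by
          simp [smul_sub, Finset.sum_sub_distrib, Finset.sum_smul]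
      _ = 0 := by rw [hS, sub_self]
  have hzero : (∑ i, ((ContinuousLinearMap.id ℝ ℝ).smulRight (w i)).comp (D i))
      = InnerProductSpace.toDual ℝ E (0 : E) := by
    ext v
    have : ∑ i, w i * -(⟪x i - θ, H v⟫) = -⟪∑ i, w i • (x i - θ), H v⟫ := by
      rw [sum_inner]
      rw [← Finset.sum_neg_distrib]
      refine Finset.sum_congr rfl fun i _ => ?_
      rw [real_inner_smul_left]
      ring
    simp only [ContinuousLinearMap.sum_apply, ContinuousLinearMap.comp_apply,
      ContinuousLinearMap.smulRight_apply, ContinuousLinearMap.id_apply, hD,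
      ContinuousLinearMap.neg_apply, innerSL_apply_apply, smul_eq_mul,
      InnerProductSpace.toDual_apply_apply, inner_zero_left]
    calc ∑ i, -(⟪x i - θ, H v⟫) * w i = ∑ i, w i * -(⟪x i - θ, H v⟫) := by
          refine Finset.sum_congr rfl fun i _ => by ring
      _ = -⟪∑ i, w i • (x i - θ), H v⟫ := this
      _ = 0 := by rw [hcenter, inner_zero_left, neg_zero]
  rw [hasGradientAt_iff_hasFDerivAt, ← hzero]
  exact hsum
end

section
/- Let E be a finite-dimensional real inner product space and φ: E → ℝ a continuously differentiable strictly convex function with Bregman divergence d_φ. Let f': (0, ∞) → (0, ∞) be continuous, nonincreasing, with f'(z) → ∞ as z → 0⁺. Let x_1, …, x_n ∈ E be pairwise distinct and fix an index i*. Then, as θ → x_{i*} with θ ∉ {x_1, …, x_n}: (i) for every i ≠ i*, f'(d_φ(x_i, θ))/f'(d_φ(x_{i*}, θ)) → 0; and (ii) the weighted mean m(θ) = (Σ_{i=1}^n f'(d_φ(x_i, θ)) x_i)/(Σ_{j=1}^n f'(d_φ(x_j, θ))) converges to x_{i*}. Hence if the cluster center coincides with a data point, the update rule does not move it away from that point.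 -/
open scoped RealInnerProductSpace
open Filter Topology

section aux
variable {E : Type*} [NormedAddCommGroup E] [InnerProductSpace ℝ E] [FiniteDimensional ℝ E]

lemma bregman_self (φ : E → ℝ) (θ : E) : bregman φ θ θ = 0 := by
  simp [bregman]

lemma bregman_continuous (φ : E → ℝ) (hφ : ContDiff ℝ 1 φ) (x : E) :
    Continuous fun θ => bregman φ x θ := by
  have hgrad : Continuous (gradient φ) :=
    (InnerProductSpace.toDual ℝ E).symm.continuous.comp (hφ.continuous_fderiv one_ne_zero)
  exact (continuous_const.sub hφ.continuous).sub
    ((continuous_const.sub continuous_id).inner hgrad)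

lemma bregman_pos (φ : E → ℝ) (hφ : ContDiff ℝ 1 φ) (hφconv : StrictConvexOn ℝ Set.univ φ)
    {x θ : E} (hne : x ≠ θ) : 0 < bregman φ x θ := by
  set v := x - θ with hv
  have hvne : v ≠ 0 := sub_ne_zero.mpr hne
  set h : ℝ → ℝ := fun t => φ (θ + t • v) with hh
  have hconv : StrictConvexOn ℝ Set.univ h := by
    refine ⟨convex_univ, fun a _ b _ hab s t hs ht hst => ?_⟩
    have key : θ + (s • a + t • b) • v = s • (θ + a • v) + t • (θ + b • v) := by
      match_scalars
      · simp only [smul_eq_mul]; linear_combination (-1 : ℝ) * hst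
      · simp only [smul_eq_mul]; ring
    have hinj : θ + a • v ≠ θ + b • v := by
      intro hE
      apply hab
      have : a • v = b • v := by
        have := add_left_cancel hE
        exact this
      have := sub_eq_zero.mpr this
      rw [← sub_smul] at this
      rcases smul_eq_zero.mp this with h1 | h1
      · exact sub_eq_zero.mp h1
      · exact absurd h1 hvne
    simpa only [hh, key] using
      hφconv.2 (Set.mem_univ _) (Set.mem_univ _) hinj hs ht hst
  have hγ : HasDerivAt (fun t : ℝ => θ + t • v) v 0 := by
    simpa using ((hasDerivAt_id (0 : ℝ)).smul_const v).const_add θ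
  have hφd : HasFDerivAt φ (fderiv ℝ φ θ) θ := (hφ.differentiable one_ne_zero θ).hasFDerivAt
  have hφd' : HasFDerivAt φ (fderiv ℝ φ θ) ((fun t : ℝ => θ + t • v) 0) := by
    simpa using hφd
  have hd : HasDerivAt h (fderiv ℝ φ θ v) 0 := hφd'.comp_hasDerivAt (0 : ℝ) hγ
  have hslope := hconv.lt_slope_of_hasDerivAt (Set.mem_univ (0 : ℝ)) (Set.mem_univ 1)
    one_pos hd
  have hs1 : slope h 0 1 = φ x - φ θ := by
    simp [slope_def_field, hh, hv]
  have hinner : ⟪x - θ, gradient φ θ⟫ = fderiv ℝ φ θ v := by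
    rw [real_inner_comm, gradient, InnerProductSpace.toDual_symm_apply]
  rw [hs1] at hslope
  simp only [bregman, hinner]
  linarith

end aux

/-- If `f'` (denoted `g`) is continuous, nonincreasing, positive on `(0, ∞)` and
blows up at `0⁺`, then as `θ → x_{i*}` (avoiding the data points): the relative
weights `g(d_φ(x_i, θ))/g(d_φ(x_{i*}, θ))` of the other points vanish, and the
weighted mean converges to `x_{i*}`; the update does not move a center away
from a data point it coincides with. -/
theorem weighted_mean_sticks_to_data_point
    {E : Type*} [NormedAddCommGroup E] [InnerProductSpace ℝ E] [FiniteDimensional ℝ E]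
    (φ : E → ℝ) (hφ : ContDiff ℝ 1 φ) (hφconv : StrictConvexOn ℝ Set.univ φ)
    (g : ℝ → ℝ) (hgcont : ContinuousOn g (Set.Ioi 0))
    (hganti : AntitoneOn g (Set.Ioi 0))
    (hgpos : ∀ z ∈ Set.Ioi (0 : ℝ), 0 < g z)
    (hgtop : Tendsto g (nhdsWithin 0 (Set.Ioi 0)) atTop)
    (n : ℕ) (x : Fin n → E) (hx : Function.Injective x)
    (istar : Fin n) :
    (∀ i : Fin n, i ≠ istar →
      Tendsto (fun θ : E => g (bregman φ (x i) θ) / g (bregman φ (x istar) θ))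
        (𝓝[(Set.range x)ᶜ] (x istar)) (𝓝 0)) ∧
    Tendsto (fun θ : E =>
        (∑ j, g (bregman φ (x j) θ))⁻¹ • ∑ i, g (bregman φ (x i) θ) • x i)
      (𝓝[(Set.range x)ᶜ] (x istar)) (𝓝 (x istar)) := by
  classical
  set L := 𝓝[(Set.range x)ᶜ] (x istar) with hL
  set w : Fin n → E → ℝ := fun i θ => g (bregman φ (x i) θ) with hw
  have hmem : ∀ᶠ θ in L, θ ∈ (Set.range x)ᶜ := eventually_mem_nhdsWithin
  have hdpos : ∀ᶠ θ in L, ∀ i, 0 < bregman φ (x i) θ := by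
    filter_upwards [hmem] with θ hθ i
    exact bregman_pos φ hφ hφconv (fun hEq => hθ ⟨i, hEq⟩)
  have hwpos : ∀ᶠ θ in L, ∀ i, 0 < w i θ := by
    filter_upwards [hdpos] with θ hθ i
    exact hgpos _ (hθ i)
  have hdstar : Tendsto (fun θ => bregman φ (x istar) θ) L (𝓝[>] (0 : ℝ)) := by
    rw [tendsto_nhdsWithin_iff]
    constructor
    · have h0 := (bregman_continuous φ hφ (x istar)).tendsto (x istar)
      rw [bregman_self] at h0
      exact h0.mono_left nhdsWithin_le_nhds
    · filter_upwards [hdpos] with θ hθ using hθ istar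
  have hwstar : Tendsto (fun θ => w istar θ) L atTop := hgtop.comp hdstar
  have part1 : ∀ i, i ≠ istar → Tendsto (fun θ => w i θ / w istar θ) L (𝓝 0) := by
    intro i hi
    have hci : (0 : ℝ) < bregman φ (x i) (x istar) :=
      bregman_pos φ hφ hφconv (fun h => hi (hx h))
    have hdi : Tendsto (fun θ => bregman φ (x i) θ)
        L (𝓝[Set.Ioi 0] (bregman φ (x i) (x istar))) := by
      rw [tendsto_nhdsWithin_iff]
      refine ⟨((bregman_continuous φ hφ (x i)).tendsto _).mono_left nhdsWithin_le_nhds, ?_⟩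
      filter_upwards [hdpos] with θ hθ using hθ i
    have hnum : Tendsto (fun θ => w i θ) L (𝓝 (g (bregman φ (x i) (x istar)))) :=
      (hgcont _ (Set.mem_Ioi.mpr hci)).tendsto.comp hdi
    exact hnum.div_atTop hwstar
  refine ⟨part1, ?_⟩
  set r : Fin n → E → ℝ := fun i θ => w i θ / w istar θ with hr
  have hrstar : Tendsto (fun θ => r istar θ) L (𝓝 1) := by
    refine Tendsto.congr' ?_ (tendsto_const_nhds : Tendsto (fun _ : E => (1 : ℝ)) L (𝓝 1))
    filter_upwards [hwpos] with θ hθ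
    exact (div_self (hθ istar).ne').symm
  have hrlim : ∀ i, Tendsto (fun θ => r i θ) L (𝓝 (if i = istar then 1 else 0)) := by
    intro i
    by_cases hi : i = istar
    · subst hi; simpa using hrstar
    · simpa [hi] using part1 i hi
  have hsum : Tendsto (fun θ => ∑ j, r j θ) L (𝓝 1) := by
    have h1 := tendsto_finset_sum Finset.univ (fun j (_ : j ∈ Finset.univ) => hrlim j)
    simpa using h1
  have hvec : Tendsto (fun θ => ∑ i, r i θ • x i) L (𝓝 (x istar)) := by
    have h1 := tendsto_finset_sum Finset.univ
      (fun i (_ : i ∈ Finset.univ) => (hrlim i).smul_const (x i))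
    simpa [ite_smul] using h1
  have hfinal : Tendsto (fun θ => (∑ j, r j θ)⁻¹ • ∑ i, r i θ • x i) L (𝓝 (x istar)) := by
    have h1 := (hsum.inv₀ one_ne_zero).smul hvec
    simpa using h1
  refine hfinal.congr' ?_
  filter_upwards [hwpos] with θ hθ
  have hc : w istar θ ≠ 0 := (hθ istar).ne'
  have h1 : ∑ j, r j θ = (∑ j, w j θ) * (w istar θ)⁻¹ := by
    simp [hr, div_eq_mul_inv, ← Finset.sum_mul]
  have h2 : ∑ i, r i θ • x i = (w istar θ)⁻¹ • ∑ i, w i θ • x i := by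
    rw [Finset.smul_sum]
    refine Finset.sum_congr rfl fun i _ => ?_
    rw [smul_smul]
    simp [hr, div_eq_mul_inv, mul_comm]
  rw [h1, h2, smul_smul, mul_inv, inv_inv, mul_assoc, mul_inv_cancel₀ hc, mul_one]
end

section
/- (Necessary condition for a bounded influence function.) Let φ: ℝ → ℝ be twice differentiable at θ with φ''(θ) > 0, with one-dimensional Bregman divergence d_φ(x, θ) = φ(x) − φ(θ) − (x − θ)φ'(θ), and suppose d_φ(x, θ) → ∞ as |x| → ∞. Let f: [0, ∞) → ℝ be differentiable and monotone nondecreasing with liminf_{z→∞} f'(z) > 0 (in particular, f' does not tend to 0 at infinity; this covers linear and convex f and concave f whose derivative does not vanish at infinity). Then the influence-function magnitude x* ↦ f'(d_φ(x*, θ)) · φ''(θ) · |x* − θ| is unbounded on ℝ: its supremum over x* ∈ ℝ is +∞. -/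
open Filter Topology

/-- Necessary condition for a bounded influence function: if `f'` does not tend
to `0` at infinity (`liminf_{z→∞} f'(z) > 0`, expressed as: `f'` is eventually
bounded below by some `ε > 0`), then the influence-function magnitude
`x* ↦ f'(d_φ(x*, θ)) · φ''(θ) · |x* − θ|` is unbounded. -/
theorem influence_function_unbounded_of_deriv_not_vanishing
    (φ : ℝ → ℝ) (θ : ℝ) (hφdiff : Differentiable ℝ φ)
    (φ'' : ℝ) (hφ'' : HasDerivAt (deriv φ) φ'' θ) (hφ''pos : 0 < φ'')
    (d : ℝ → ℝ) (hd : ∀ x, d x = φ x - φ θ - (x - θ) * deriv φ θ)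
    (hdtop : Tendsto d (Filter.cocompact ℝ) atTop)
    (f : ℝ → ℝ) (hfdiff : DifferentiableOn ℝ f (Set.Ici 0))
    (hfmono : MonotoneOn f (Set.Ici 0))
    (hliminf : ∃ ε > (0 : ℝ), ∀ᶠ z in atTop, ε ≤ derivWithin f (Set.Ici 0) z) :
    ∀ M : ℝ, ∃ x : ℝ, M < derivWithin f (Set.Ici 0) (d x) * φ'' * |x - θ| := by
  intro M
  obtain ⟨ε, hε, hev⟩ := hliminf
  obtain ⟨Z, hZ⟩ := eventually_atTop.mp hev
  have habs : Tendsto (fun x : ℝ => |x - θ|) (cocompact ℝ) atTop := by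
    have h1 : Tendsto (fun x : ℝ => |x| - |θ|) (cocompact ℝ) atTop :=
      (tendsto_norm_cocompact_atTop (E := ℝ)).atTop_add tendsto_const_nhds
    exact tendsto_atTop_mono (fun x => by
      have := abs_sub_abs_le_abs_sub x θ; linarith) h1
  set R : ℝ := max 0 ((M + 1) / (ε * φ''))
  have hcomb : ∀ᶠ x in cocompact ℝ, Z ≤ d x ∧ R ≤ |x - θ| :=
    (hdtop.eventually_ge_atTop Z).and (habs.eventually_ge_atTop R)
  obtain ⟨x, hxZ, hxR⟩ := hcomb.exists
  refine ⟨x, ?_⟩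
  have hεd : ε ≤ derivWithin f (Set.Ici 0) (d x) := hZ _ hxZ
  have hRnn : (0 : ℝ) ≤ R := le_max_left _ _
  have hR2 : (M + 1) / (ε * φ'') ≤ R := le_max_right _ _
  have hεφ : 0 < ε * φ'' := mul_pos hε hφ''pos
  have h3 : M + 1 ≤ ε * φ'' * R := by
    rw [div_le_iff₀ hεφ] at hR2; linarith [hR2]
  have h4 : ε * φ'' * R ≤ ε * φ'' * |x - θ| := by
    apply mul_le_mul_of_nonneg_left hxR (le_of_lt hεφ)
  have h5 : ε * φ'' * |x - θ| ≤ derivWithin f (Set.Ici 0) (d x) * φ'' * |x - θ| :=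
    mul_le_mul_of_nonneg_right (mul_le_mul_of_nonneg_right hεd hφ''pos.le) (abs_nonneg _)
  linarith
end

section
/- (Redescending influence function for the power mean with β < 0.) Let L ≥ 1, and for each l = 1, …, L let φ_l: ℝ → ℝ be differentiable and strictly convex with one-dimensional Bregman divergence d_{φ_l}(x, t) = φ_l(x) − φ_l(t) − (x − t)φ_l'(t), and suppose d_{φ_l}(x, θ^{(l)}) → ∞ as |x| → ∞. Define the additive Bregman divergence on ℝ^L by d_φ(x, θ) = Σ_{l=1}^L d_{φ_l}(x^{(l)}, θ^{(l)}) and fix θ ∈ ℝ^L, a ≥ 0, β < 0, and any linear map A: ℝ^L → ℝ^L. Then lim_{‖x‖ → ∞} (d_φ(x, θ) + a)^{β − 1} · ‖A(x − θ)‖ = 0. In particular, for the power-mean objective with β < 0 the influence function is redescending for general (additive) Bregman divergences. -/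
open Filter Topology

/-- Tail bound for a convex function: if `f θ0 = 0` and `1 ≤ f t₀` with
`θ0 < t₀`, then `f` grows at least linearly to the right of `t₀`. -/
lemma convex_tail_bound (f : ℝ → ℝ) (θ0 t t₀ : ℝ) (hconv : ConvexOn ℝ Set.univ f)
    (h0 : f θ0 = 0) (ht₀f : 1 ≤ f t₀) (ht₀θ : θ0 < t₀) (ht : t₀ ≤ t) :
    (1 / (t₀ - θ0)) * (t - θ0) ≤ f t := by
  have hθt : θ0 < t := lt_of_lt_of_le ht₀θ ht
  have hne : t - θ0 ≠ 0 := by intro h; linarith [sub_eq_zero.mp h]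
  have ha : (0:ℝ) ≤ (t - t₀) / (t - θ0) := div_nonneg (by linarith) (by linarith)
  have hb : (0:ℝ) ≤ (t₀ - θ0) / (t - θ0) := div_nonneg (by linarith) (by linarith)
  have hab : (t - t₀) / (t - θ0) + (t₀ - θ0) / (t - θ0) = 1 := by
    rw [← add_div]
    have : t - t₀ + (t₀ - θ0) = t - θ0 := by ring
    rw [this, div_self hne]
  have hkey := hconv.2 (Set.mem_univ θ0) (Set.mem_univ t) ha hb hab
  simp only [smul_eq_mul, h0, mul_zero, zero_add] at hkey
  have hcomb : (t - t₀) / (t - θ0) * θ0 + (t₀ - θ0) / (t - θ0) * t = t₀ := by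
    field_simp
    ring
  rw [hcomb] at hkey
  have h1 : (1:ℝ) ≤ (t₀ - θ0) / (t - θ0) * f t := le_trans ht₀f hkey
  rw [div_mul_eq_mul_div, le_div_iff₀ (by linarith)] at h1
  rw [div_mul_eq_mul_div, one_mul, div_le_iff₀ (by linarith)]
  nlinarith

/-- A continuous convex function on `ℝ` vanishing at `θ0` and tending to `∞`
at infinity grows at least linearly in `|t - θ0|`. -/
lemma linear_growth_of_convex (f : ℝ → ℝ) (θ0 : ℝ)
    (hconv : ConvexOn ℝ Set.univ f) (hcont : Continuous f) (h0 : f θ0 = 0)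
    (htop : Tendsto f (Filter.cocompact ℝ) atTop) :
    ∃ c C : ℝ, 0 < c ∧ 0 ≤ C ∧ ∀ t, c * |t - θ0| - C ≤ f t := by
  rw [cocompact_eq_atBot_atTop] at htop
  have hT : Tendsto f atTop atTop := htop.mono_left le_sup_right
  have hB : Tendsto f atBot atTop := htop.mono_left le_sup_left
  obtain ⟨t₀, ht₀f, ht₀⟩ :=
    ((hT.eventually_ge_atTop 1).and (eventually_ge_atTop (θ0 + 1))).exists
  obtain ⟨t₁, ht₁f, ht₁⟩ :=
    ((hB.eventually_ge_atTop 1).and (eventually_le_atBot (θ0 - 1))).exists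
  have ht₀θ : θ0 < t₀ := by linarith
  have ht₁θ : t₁ < θ0 := by linarith
  -- the reflected function, to handle the left tail
  have hconv' : ConvexOn ℝ Set.univ (fun s => f (2 * θ0 - s)) := by
    refine ⟨convex_univ, fun x _ y _ p q hp hq hpq => ?_⟩
    have := hconv.2 (Set.mem_univ (2 * θ0 - x)) (Set.mem_univ (2 * θ0 - y)) hp hq hpq
    simp only [smul_eq_mul] at this ⊢
    have harg : p * (2 * θ0 - x) + q * (2 * θ0 - y) = 2 * θ0 - (p * x + q * y) := by
      have : p * (2 * θ0 - x) + q * (2 * θ0 - y) = (p + q) * (2 * θ0) - (p * x + q * y) := by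
        ring
      rw [this, hpq]; ring
    rw [harg] at this
    exact this
  have hleft : ∀ t, t ≤ t₁ → (1 / (θ0 - t₁)) * (θ0 - t) ≤ f t := by
    intro t ht
    have := convex_tail_bound (fun s => f (2 * θ0 - s)) θ0 (2 * θ0 - t) (2 * θ0 - t₁)
      hconv' (by simpa [show 2 * θ0 - θ0 = θ0 from by ring] using h0)
      (by simpa using ht₁f) (by linarith) (by linarith)
    simp only [show 2 * θ0 - (2 * θ0 - t) = t by ring] at this
    calc (1 / (θ0 - t₁)) * (θ0 - t)
        = 1 / (2 * θ0 - t₁ - θ0) * (2 * θ0 - t - θ0) := by ring_nf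
      _ ≤ f t := this
  have hright : ∀ t, t₀ ≤ t → (1 / (t₀ - θ0)) * (t - θ0) ≤ f t :=
    fun t ht => convex_tail_bound f θ0 t t₀ hconv h0 ht₀f ht₀θ ht
  -- minimum of f on the middle interval
  obtain ⟨z, hz, hzmin⟩ := isCompact_Icc.exists_isMinOn (Set.nonempty_Icc.mpr (by linarith))
    (hcont.continuousOn (s := Set.Icc t₁ t₀))
  set c : ℝ := min (1 / (t₀ - θ0)) (1 / (θ0 - t₁)) with hc
  have hcpos : 0 < c := lt_min (one_div_pos.mpr (by linarith)) (one_div_pos.mpr (by linarith))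
  set C : ℝ := c * (t₀ - t₁) - f z with hC
  have hzθ : f z ≤ 0 := by
    have := hzmin (Set.mem_Icc.mpr ⟨le_of_lt ht₁θ, le_of_lt ht₀θ⟩)
    simpa [h0] using this
  have hCnn : 0 ≤ C := by
    have : 0 ≤ c * (t₀ - t₁) := le_of_lt (mul_pos hcpos (by linarith))
    simp only [hC]; linarith
  refine ⟨c, C, hcpos, hCnn, fun t => ?_⟩
  rcases le_total t t₁ with h1 | h1
  · have habs : |t - θ0| = θ0 - t := by rw [abs_of_nonpos (by linarith)]; ring
    have := hleft t h1
    have hcle : c ≤ 1 / (θ0 - t₁) := min_le_right _ _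
    have : c * (θ0 - t) ≤ f t :=
      le_trans (mul_le_mul_of_nonneg_right hcle (by linarith)) this
    rw [habs]; linarith
  rcases le_total t₀ t with h2 | h2
  · have habs : |t - θ0| = t - θ0 := abs_of_nonneg (by linarith)
    have := hright t h2
    have hcle : c ≤ 1 / (t₀ - θ0) := min_le_left _ _
    have : c * (t - θ0) ≤ f t :=
      le_trans (mul_le_mul_of_nonneg_right hcle (by linarith)) this
    rw [habs]; linarith
  · -- middle
    have hmem : t ∈ Set.Icc t₁ t₀ := Set.mem_Icc.mpr ⟨h1, h2⟩
    have hfz : f z ≤ f t := hzmin hmem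
    have habs : |t - θ0| ≤ t₀ - t₁ := by
      rw [abs_le]; constructor <;> linarith
    have : c * |t - θ0| ≤ c * (t₀ - t₁) := mul_le_mul_of_nonneg_left habs (le_of_lt hcpos)
    simp only [hC]; linarith

/-- Redescending influence function for the power mean with `β < 0`: for an
additive Bregman divergence on `ℝ^L` whose coordinate divergences blow up at
infinity, `f'(d_φ(x, θ) + a) · ‖A(x − θ)‖ = (d_φ(x, θ) + a)^(β−1) ‖A(x − θ)‖ → 0`
as `‖x‖ → ∞`. -/
theorem power_mean_influence_redescending
    (L : ℕ) (hL : 1 ≤ L)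
    (φ : Fin L → ℝ → ℝ)
    (hφdiff : ∀ l, Differentiable ℝ (φ l))
    (hφconv : ∀ l, StrictConvexOn ℝ Set.univ (φ l))
    (θ : EuclideanSpace ℝ (Fin L))
    (d : Fin L → ℝ → ℝ)
    (hd : ∀ l xl, d l xl = φ l xl - φ l (θ l) - (xl - θ l) * deriv (φ l) (θ l))
    (hdtop : ∀ l, Tendsto (d l) (Filter.cocompact ℝ) atTop)
    (a β : ℝ) (ha : 0 ≤ a) (hβ : β < 0)
    (A : EuclideanSpace ℝ (Fin L) →ₗ[ℝ] EuclideanSpace ℝ (Fin L)) :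
    Tendsto (fun x : EuclideanSpace ℝ (Fin L) =>
        ((∑ l, d l (x l)) + a) ^ (β - 1) * ‖A (x - θ)‖)
      (Filter.cocompact (EuclideanSpace ℝ (Fin L))) (𝓝 0) := by
  -- continuity, convexity and vanishing at `θ l` of each coordinate divergence
  have hdc : ∀ l, Continuous (d l) := by
    intro l
    have hfun : d l = fun t => φ l t - φ l (θ l) - (t - θ l) * deriv (φ l) (θ l) :=
      funext (hd l)
    rw [hfun]
    exact ((hφdiff l).continuous.sub continuous_const).sub
      ((continuous_id.sub continuous_const).mul continuous_const)
  have hdconv : ∀ l, ConvexOn ℝ Set.univ (d l) := by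
    intro l
    refine ⟨convex_univ, fun x _ y _ p q hp hq hpq => ?_⟩
    have h := (hφconv l).convexOn.2 (Set.mem_univ x) (Set.mem_univ y) hp hq hpq
    simp only [smul_eq_mul, hd l] at h ⊢
    have hq : q = 1 - p := by linarith
    subst hq
    nlinarith [h]
  have hd0 : ∀ l, d l (θ l) = 0 := fun l => by simp [hd l]
  choose c C hcpos hCnn hbound using fun l =>
    linear_growth_of_convex (d l) (θ l) (hdconv l) (hdc l) (hd0 l) (hdtop l)
  haveI : Nonempty (Fin L) := Fin.pos_iff_nonempty.mp hL
  set c0 : ℝ := Finset.univ.inf' Finset.univ_nonempty c with hc0def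
  have hc0pos : 0 < c0 := by
    rw [hc0def, Finset.lt_inf'_iff]
    exact fun l _ => hcpos l
  have hc0le : ∀ l, c0 ≤ c l := fun l => Finset.inf'_le c (Finset.mem_univ l)
  set C0 : ℝ := ∑ l, C l with hC0def
  -- the Euclidean norm is at most the ℓ¹ norm
  have hnorm_le : ∀ x : EuclideanSpace ℝ (Fin L), ‖x - θ‖ ≤ ∑ l, |x l - θ l| := by
    intro x
    rw [EuclideanSpace.norm_eq]
    have h1 : ∀ l, ‖(x - θ) l‖ = |x l - θ l| := fun l => by
      simp [PiLp.sub_apply, Real.norm_eq_abs]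
    calc Real.sqrt (∑ l, ‖(x - θ) l‖ ^ 2)
        ≤ Real.sqrt ((∑ l, ‖(x - θ) l‖) ^ 2) :=
          Real.sqrt_le_sqrt (Finset.sum_sq_le_sq_sum_of_nonneg fun i _ => norm_nonneg _)
      _ = ∑ l, ‖(x - θ) l‖ := Real.sqrt_sq (Finset.sum_nonneg fun i _ => norm_nonneg _)
      _ = ∑ l, |x l - θ l| := Finset.sum_congr rfl fun l _ => h1 l
  -- linear lower bound on the total divergence
  have hD : ∀ x : EuclideanSpace ℝ (Fin L), c0 * ‖x - θ‖ - C0 ≤ ∑ l, d l (x l) := by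
    intro x
    have h1 : ∑ l, (c0 * |x l - θ l| - C l) ≤ ∑ l, d l (x l) := by
      refine Finset.sum_le_sum fun l _ => le_trans ?_ (hbound l (x l))
      have := mul_le_mul_of_nonneg_right (hc0le l) (abs_nonneg (x l - θ l))
      linarith
    have h2 : c0 * ‖x - θ‖ - C0 ≤ ∑ l, (c0 * |x l - θ l| - C l) := by
      rw [Finset.sum_sub_distrib, ← Finset.mul_sum, hC0def]
      have := mul_le_mul_of_nonneg_left (hnorm_le x) hc0pos.le
      linarith
    linarith
  -- the linear map is continuous
  set A' : EuclideanSpace ℝ (Fin L) →L[ℝ] EuclideanSpace ℝ (Fin L) :=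
    LinearMap.toContinuousLinearMap A with hA'
  have hAeq : ∀ y, A y = A' y := fun y => by simp [hA']
  set M : ℝ := ‖A'‖ with hM
  have hMnn : 0 ≤ M := norm_nonneg _
  -- the distance to θ tends to infinity
  have hr : Tendsto (fun x : EuclideanSpace ℝ (Fin L) => ‖x - θ‖)
      (Filter.cocompact (EuclideanSpace ℝ (Fin L))) atTop := by
    have h1 : Tendsto (fun x : EuclideanSpace ℝ (Fin L) => ‖x‖ + -‖θ‖)
        (Filter.cocompact (EuclideanSpace ℝ (Fin L))) atTop :=
      tendsto_atTop_add_const_right _ _ tendsto_norm_cocompact_atTop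
    refine tendsto_atTop_mono (fun x => ?_) h1
    have := norm_sub_norm_le x θ
    linarith
  -- the dominating function tends to zero
  set K : ℝ := (c0 / 2) ^ (β - 1) * M with hK
  have hg0 : Tendsto (fun r : ℝ => r ^ β) atTop (𝓝 (0:ℝ)) := by
    have := tendsto_rpow_neg_atTop (neg_pos.mpr hβ)
    simpa using this
  have hg : Tendsto (fun x : EuclideanSpace ℝ (Fin L) => K * ‖x - θ‖ ^ β)
      (Filter.cocompact (EuclideanSpace ℝ (Fin L))) (𝓝 0) := by
    have := (hg0.comp hr).const_mul K
    simpa using this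
  -- the eventual region
  set R : ℝ := max 1 (2 * (C0 + 1) / c0) with hR
  have hev : ∀ᶠ x : EuclideanSpace ℝ (Fin L) in
      Filter.cocompact (EuclideanSpace ℝ (Fin L)), R ≤ ‖x - θ‖ :=
    hr.eventually_ge_atTop R
  have hfacts : ∀ x : EuclideanSpace ℝ (Fin L), R ≤ ‖x - θ‖ →
      0 < c0 * ‖x - θ‖ / 2 ∧ c0 * ‖x - θ‖ / 2 ≤ (∑ l, d l (x l)) + a := by
    intro x hx
    have hr1 : (1:ℝ) ≤ ‖x - θ‖ := le_trans (le_max_left _ _) hx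
    have hr2 : 2 * (C0 + 1) / c0 ≤ ‖x - θ‖ := le_trans (le_max_right _ _) hx
    have hr2' : 2 * (C0 + 1) ≤ c0 * ‖x - θ‖ := by
      rw [div_le_iff₀ hc0pos] at hr2; linarith
    have hC0nn : 0 ≤ C0 := Finset.sum_nonneg fun l _ => hCnn l
    constructor
    · nlinarith
    · have := hD x
      nlinarith
  refine squeeze_zero' ?_ ?_ hg
  · filter_upwards [hev] with x hx
    obtain ⟨hpos, hle⟩ := hfacts x hx
    exact mul_nonneg (Real.rpow_nonneg (by linarith) _) (norm_nonneg _)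
  · filter_upwards [hev] with x hx
    obtain ⟨hpos, hle⟩ := hfacts x hx
    have hr1 : (1:ℝ) ≤ ‖x - θ‖ := le_trans (le_max_left _ _) hx
    have h1 : ((∑ l, d l (x l)) + a) ^ (β - 1) ≤ (c0 * ‖x - θ‖ / 2) ^ (β - 1) :=
      Real.rpow_le_rpow_of_nonpos hpos hle (by linarith)
    have h2 : ‖A (x - θ)‖ ≤ M * ‖x - θ‖ := by
      rw [hAeq]; exact A'.le_opNorm _
    have h3 : ((∑ l, d l (x l)) + a) ^ (β - 1) * ‖A (x - θ)‖
        ≤ (c0 * ‖x - θ‖ / 2) ^ (β - 1) * (M * ‖x - θ‖) :=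
      mul_le_mul h1 h2 (norm_nonneg _) (Real.rpow_nonneg hpos.le _)
    refine le_trans h3 (le_of_eq ?_)
    have hsplit : c0 * ‖x - θ‖ / 2 = (c0 / 2) * ‖x - θ‖ := by ring
    rw [hsplit, Real.mul_rpow (by positivity) (by linarith)]
    have h0 : (0:ℝ) < ‖x - θ‖ := by linarith
    have hrpow : ‖x - θ‖ ^ (β - 1) * ‖x - θ‖ = ‖x - θ‖ ^ β := by
      have h := Real.rpow_add h0 (β - 1) 1
      rw [Real.rpow_one] at h
      rw [← h, show β - 1 + 1 = β by ring]
    rw [hK, ← hrpow]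
    ring
end

section
/- (Redescending influence function for the log-sum-exp objective with β < 1.) Let L ≥ 1, and for each l = 1, …, L let φ_l: ℝ → ℝ be differentiable and strictly convex with one-dimensional Bregman divergence d_{φ_l}, and suppose d_{φ_l}(x, θ^{(l)}) → ∞ as |x| → ∞. Define d_φ(x, θ) = Σ_{l=1}^L d_{φ_l}(x^{(l)}, θ^{(l)}) on ℝ^L and fix θ ∈ ℝ^L, β < 1, and any linear map A: ℝ^L → ℝ^L. Then lim_{‖x‖ → ∞} exp(−(1 − β) d_φ(x, θ)) · ‖A(x − θ)‖ = 0. In particular, for the log-sum-exp objective with β < 1 the influence function is redescending for general (additive) Bregman divergences. -/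
open Filter Topology

/-- A convex continuous function on `ℝ` that tends to `+∞` at `cocompact`
admits a linear lower bound `a * |t - t₀| - C` with `a > 0`. -/
lemma convex_lin_lower_bound {g : ℝ → ℝ} (hg : ConvexOn ℝ Set.univ g)
    (hc : Continuous g) (ht : Tendsto g (Filter.cocompact ℝ) atTop) (t₀ : ℝ) :
    ∃ a > 0, ∃ C : ℝ, ∀ t, a * |t - t₀| - C ≤ g t := by
  have hev : ∀ᶠ t in Filter.cocompact ℝ, g t₀ + 1 ≤ g t :=
    ht.eventually (eventually_ge_atTop (g t₀ + 1))
  obtain ⟨K, hK, hKg⟩ := (hasBasis_cocompact.eventually_iff).mp hev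
  obtain ⟨r, hr⟩ := hK.isBounded.subset_ball t₀
  set R : ℝ := max r 1 with hR
  have hR1 : (1 : ℝ) ≤ R := le_max_right _ _
  have hR0 : (0 : ℝ) < R := lt_of_lt_of_le one_pos hR1
  have hKR : K ⊆ Metric.ball t₀ R := hr.trans (Metric.ball_subset_ball (le_max_left _ _))
  -- growth outside the ball
  have hout : ∀ t : ℝ, R ≤ |t - t₀| → g t₀ + |t - t₀| / R ≤ g t := by
    intro t hs
    set s : ℝ := |t - t₀| with hsdef
    have hs0 : 0 < s := lt_of_lt_of_le hR0 hs
    set lam : ℝ := R / s with hlam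
    have hlam0 : 0 < lam := div_pos hR0 hs0
    have hlam1 : lam ≤ 1 := (div_le_one hs0).mpr hs
    set p : ℝ := t₀ + lam * (t - t₀) with hp
    have hpd : |p - t₀| = R := by
      have : p - t₀ = lam * (t - t₀) := by rw [hp]; ring
      rw [this, abs_mul, abs_of_pos hlam0, ← hsdef, hlam]
      field_simp
    have hpK : p ∉ K := by
      intro hpK
      have := hKR hpK
      rw [Metric.mem_ball, Real.dist_eq, hpd] at this
      exact lt_irrefl _ this
    have hgp : g t₀ + 1 ≤ g p := hKg (Set.mem_compl hpK)
    have hcx := hg.2 (Set.mem_univ t₀) (Set.mem_univ t)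
      (by linarith : (0:ℝ) ≤ 1 - lam) hlam0.le (by ring)
    simp only [smul_eq_mul] at hcx
    have hpeq : (1 - lam) * t₀ + lam * t = p := by rw [hp]; ring
    rw [hpeq] at hcx
    -- from g t₀ + 1 ≤ (1-lam) g t₀ + lam g t, deduce g t ≥ g t₀ + 1/lam
    have h1 : 1 ≤ lam * (g t - g t₀) := by nlinarith
    have h2 : 1 / lam ≤ g t - g t₀ := by
      rw [div_le_iff₀ hlam0]
      nlinarith
    have h3 : 1 / lam = s / R := by rw [hlam]; field_simp
    rw [h3] at h2
    linarith
  -- minimum on the closed ball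
  obtain ⟨z, hz, hzmin⟩ := (isCompact_closedBall t₀ R).exists_isMinOn
    ⟨t₀, Metric.mem_closedBall_self hR0.le⟩ hc.continuousOn
  set m : ℝ := g z with hm
  have hmt₀ : m ≤ g t₀ := hzmin (Metric.mem_closedBall_self hR0.le)
  refine ⟨1 / R, by positivity, 1 - m, ?_⟩
  intro t
  rcases le_or_gt (|t - t₀|) R with hcase | hcase
  · have htK : t ∈ Metric.closedBall t₀ R := by
      rw [Metric.mem_closedBall, Real.dist_eq]; exact hcase
    have : m ≤ g t := hzmin htK
    have h4 : 1 / R * |t - t₀| ≤ 1 := by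
      rw [div_mul_eq_mul_div, div_le_one hR0]; linarith
    linarith
  · have := hout t hcase.le
    have h4 : 1 / R * |t - t₀| = |t - t₀| / R := by ring
    linarith [h4 ▸ this]

/-- ℓ²-norm is at most the ℓ¹-norm on `EuclideanSpace`. -/
lemma euclidean_norm_le_sum_abs {L : ℕ} (v : EuclideanSpace ℝ (Fin L)) :
    ‖v‖ ≤ ∑ l, |v l| := by
  rw [EuclideanSpace.norm_eq]
  have h1 : ∑ l, ‖v l‖ ^ 2 ≤ (∑ l, |v l|) ^ 2 := by
    simp only [Real.norm_eq_abs]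
    exact Finset.sum_sq_le_sq_sum_of_nonneg fun i _ => abs_nonneg _
  calc √(∑ l, ‖v l‖ ^ 2) ≤ √((∑ l, |v l|) ^ 2) := Real.sqrt_le_sqrt h1
    _ = ∑ l, |v l| := Real.sqrt_sq (Finset.sum_nonneg fun i _ => abs_nonneg _)

/-- Redescending influence function for the log-sum-exp objective with `β < 1`:
for an additive Bregman divergence on `ℝ^L` whose coordinate divergences blow up
at infinity, `exp(−(1 − β) d_φ(x, θ)) · ‖A(x − θ)‖ → 0` as `‖x‖ → ∞`. -/
theorem log_sum_exp_influence_redescending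
    (L : ℕ) (hL : 1 ≤ L)
    (φ : Fin L → ℝ → ℝ)
    (hφdiff : ∀ l, Differentiable ℝ (φ l))
    (hφconv : ∀ l, StrictConvexOn ℝ Set.univ (φ l))
    (θ : EuclideanSpace ℝ (Fin L))
    (d : Fin L → ℝ → ℝ)
    (hd : ∀ l xl, d l xl = φ l xl - φ l (θ l) - (xl - θ l) * deriv (φ l) (θ l))
    (hdtop : ∀ l, Tendsto (d l) (Filter.cocompact ℝ) atTop)
    (β : ℝ) (hβ : β < 1)
    (A : EuclideanSpace ℝ (Fin L) →ₗ[ℝ] EuclideanSpace ℝ (Fin L)) :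
    Tendsto (fun x : EuclideanSpace ℝ (Fin L) =>
        Real.exp (-(1 - β) * ((∑ l, d l (x l)))) * ‖A (x - θ)‖)
      (Filter.cocompact (EuclideanSpace ℝ (Fin L))) (𝓝 0) := by
  have hc1 : (0:ℝ) < 1 - β := by linarith
  -- per-coordinate linear lower bounds
  have key : ∀ l, ∃ a > 0, ∃ C, ∀ t, a * |t - θ l| - C ≤ d l t := by
    intro l
    set c : ℝ := deriv (φ l) (θ l) with hcdef
    have hdeq : d l = fun t => φ l t + ((-c) * t + (c * θ l - φ l (θ l))) :=
      funext fun t => by rw [hd]; ring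
    have haff : ConvexOn ℝ Set.univ (fun t : ℝ => (-c) * t + (c * θ l - φ l (θ l))) := by
      refine ⟨convex_univ, ?_⟩
      intro x _ y _ a b ha hb hab
      simp only [smul_eq_mul]
      apply le_of_eq
      linear_combination (φ l (θ l) - c * θ l) * hab
    have hcvx : ConvexOn ℝ Set.univ (d l) := by
      rw [hdeq]; exact (hφconv l).convexOn.add haff
    have hcont : Continuous (d l) := by
      rw [hdeq]
      exact (hφdiff l).continuous.add (by continuity)
    exact convex_lin_lower_bound hcvx hcont (hdtop l) (θ l)
  choose a ha C hkey using key
  haveI : Nonempty (Fin L) := Fin.pos_iff_nonempty.mp (by omega)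
  set a0 : ℝ := Finset.univ.inf' Finset.univ_nonempty a with ha0def
  have ha0 : 0 < a0 := (Finset.lt_inf'_iff _).mpr fun l _ => ha l
  set C0 : ℝ := ∑ l, C l with hC0def
  -- global lower bound for the sum of divergences
  have hS : ∀ x : EuclideanSpace ℝ (Fin L), a0 * ‖x - θ‖ - C0 ≤ ∑ l, d l (x l) := by
    intro x
    have h1 : ∀ l ∈ Finset.univ, a0 * |x l - θ l| - C l ≤ d l (x l) := by
      intro l _
      refine le_trans ?_ (hkey l (x l))
      have : a0 ≤ a l := Finset.inf'_le a (Finset.mem_univ l)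
      nlinarith [abs_nonneg (x l - θ l)]
    have h2 : a0 * (∑ l, |x l - θ l|) - C0 ≤ ∑ l, d l (x l) := by
      rw [Finset.mul_sum, hC0def, ← Finset.sum_sub_distrib]
      exact Finset.sum_le_sum h1
    have h3 : ‖x - θ‖ ≤ ∑ l, |x l - θ l| := by
      have := euclidean_norm_le_sum_abs (x - θ)
      simpa using this
    nlinarith
  -- operator norm of A
  let A' : EuclideanSpace ℝ (Fin L) →L[ℝ] EuclideanSpace ℝ (Fin L) :=
    LinearMap.toContinuousLinearMap A
  have hA : ∀ v, ‖A v‖ ≤ ‖A'‖ * ‖v‖ := fun v => A'.le_opNorm v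
  set b : ℝ := (1 - β) * a0 with hb
  have hbpos : 0 < b := mul_pos hc1 ha0
  -- the dominating function tends to 0 at atTop
  have hG : Tendsto (fun r : ℝ =>
      Real.exp ((1 - β) * C0) * ‖A'‖ * (Real.exp (-(b * r)) * r)) atTop (𝓝 0) := by
    have h1 : Tendsto (fun r : ℝ => Real.exp (-(b * r)) * r) atTop (𝓝 0) := by
      have hcomp : Tendsto (fun r : ℝ => b * r) atTop atTop :=
        tendsto_id.const_mul_atTop hbpos
      have h2 := (Real.tendsto_pow_mul_exp_neg_atTop_nhds_zero 1).comp hcomp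
      have heq : (fun r : ℝ => Real.exp (-(b * r)) * r)
          = fun r : ℝ => (1 / b) * ((fun x : ℝ => x ^ 1 * Real.exp (-x)) ((fun r : ℝ => b * r) r)) := by
        funext r
        simp only [pow_one]
        field_simp
      rw [heq]
      simpa using h2.const_mul (1 / b)
    have := h1.const_mul (Real.exp ((1 - β) * C0) * ‖A'‖)
    simpa [mul_assoc] using this
  -- ‖x - θ‖ → ∞ at cocompact
  have hr : Tendsto (fun x : EuclideanSpace ℝ (Fin L) => ‖x - θ‖)
      (Filter.cocompact (EuclideanSpace ℝ (Fin L))) atTop := by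
    have h0 : Tendsto (fun x : EuclideanSpace ℝ (Fin L) => ‖x‖ - ‖θ‖)
        (Filter.cocompact (EuclideanSpace ℝ (Fin L))) atTop := by
      simpa [sub_eq_add_neg] using
        tendsto_atTop_add_const_right (Filter.cocompact (EuclideanSpace ℝ (Fin L))) (-‖θ‖)
          tendsto_norm_cocompact_atTop
    exact tendsto_atTop_mono (fun x => norm_sub_norm_le x θ) h0
  -- squeeze
  refine squeeze_zero (fun x => mul_nonneg (Real.exp_pos _).le (norm_nonneg _))
    (fun x => ?_) (hG.comp hr)
  set r : ℝ := ‖x - θ‖ with hrdef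
  have hr0 : 0 ≤ r := norm_nonneg _
  have hexp : Real.exp (-(1 - β) * (∑ l, d l (x l)))
      ≤ Real.exp (-(1 - β) * (a0 * r - C0)) := by
    apply Real.exp_le_exp.mpr
    have := hS x
    nlinarith
  calc Real.exp (-(1 - β) * (∑ l, d l (x l))) * ‖A (x - θ)‖
      ≤ Real.exp (-(1 - β) * (a0 * r - C0)) * (‖A'‖ * r) :=
        mul_le_mul hexp (hA (x - θ)) (norm_nonneg _) (Real.exp_pos _).le
    _ = Real.exp ((1 - β) * C0) * ‖A'‖ * (Real.exp (-(b * r)) * r) := by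
        rw [show -(1 - β) * (a0 * r - C0) = (1 - β) * C0 + (-(b * r)) by rw [hb]; ring,
          Real.exp_add]
        ring
end

section
/- (Robustness classification for α-divergence with α < 1, α ≠ 0, under the power mean.) Fix real α with α < 1 and α ≠ 0, θ > 0, a ≥ 0, and define d_α(x, θ) = (x^α + (α − 1)θ^α − α x θ^{α−1})/(α(α − 1)) for x > 0. Then, as x → +∞: (i) if β < 0, then (x − θ)/(d_α(x, θ) + a)^{1−β} → 0; (ii) if β = 0, then (x − θ)/(d_α(x, θ) + a) → (1 − α) θ^{1−α} (a finite positive limit); (iii) if β > 0, then (x − θ)/(d_α(x, θ) + a)^{1−β} → +∞. -/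
open Filter Topology

/-- Robustness classification for the α-divergence with `α < 1`, `α ≠ 0`, under
the power mean: as `x → ∞`, the influence factor `(x − θ)/(d_α(x, θ) + a)^(1−β)`
is redescending for `β < 0`, bounded with limit `(1 − α) θ^(1−α)` for `β = 0`,
and divergent for `β > 0`. -/
theorem alpha_divergence_influence_classification_alpha_lt_one
    (α θ a : ℝ) (hα : α < 1) (hα0 : α ≠ 0) (hθ : 0 < θ) (ha : 0 ≤ a)
    (d : ℝ → ℝ)
    (hd : ∀ x : ℝ, 0 < x →
      d x = (x ^ α + (α - 1) * θ ^ α - α * x * θ ^ (α - 1)) / (α * (α - 1))) :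
    (∀ β : ℝ, β < 0 →
      Tendsto (fun x : ℝ => (x - θ) / (d x + a) ^ (1 - β)) atTop (𝓝 0)) ∧
    Tendsto (fun x : ℝ => (x - θ) / (d x + a)) atTop (𝓝 ((1 - α) * θ ^ (1 - α))) ∧
    (∀ β : ℝ, 0 < β →
      Tendsto (fun x : ℝ => (x - θ) / (d x + a) ^ (1 - β)) atTop atTop) := by
  have hα1 : (0:ℝ) < 1 - α := by linarith
  have hα1' : α - 1 ≠ 0 := by linarith
  have hθp : 0 < θ ^ (α - 1) := Real.rpow_pos_of_pos hθ _
  set c : ℝ := θ ^ (α - 1) / (1 - α) with hc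
  have hcpos : 0 < c := div_pos hθp hα1
  -- limit of x^(α-1)
  have h1 : Tendsto (fun x : ℝ => x ^ (α - 1)) atTop (𝓝 0) := by
    have := tendsto_rpow_neg_atTop hα1
    have heq : (fun x : ℝ => x ^ (-(1 - α))) = fun x : ℝ => x ^ (α - 1) := by
      funext x; norm_num
    rwa [heq] at this
  have h2 : Tendsto (fun x : ℝ => x⁻¹) atTop (𝓝 (0:ℝ)) := tendsto_inv_atTop_zero
  -- limit of (d x + a)/x
  have hratio : Tendsto (fun x : ℝ => (d x + a) / x) atTop (𝓝 c) := by
    have hg : Tendsto (fun x : ℝ =>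
        x ^ (α - 1) * (1 / (α * (α - 1))) + (θ ^ α / α) * x⁻¹ + a * x⁻¹
          + θ ^ (α - 1) / (1 - α)) atTop
        (𝓝 (0 * (1 / (α * (α - 1))) + (θ ^ α / α) * 0 + a * 0 + θ ^ (α - 1) / (1 - α))) := by
      exact (((h1.mul_const _).add (h2.const_mul _)).add (h2.const_mul _)).add
        tendsto_const_nhds
    have hg' : Tendsto (fun x : ℝ =>
        x ^ (α - 1) * (1 / (α * (α - 1))) + (θ ^ α / α) * x⁻¹ + a * x⁻¹
          + θ ^ (α - 1) / (1 - α)) atTop (𝓝 c) := by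
      simpa using hg
    refine hg'.congr' ?_
    filter_upwards [eventually_gt_atTop (0:ℝ)] with x hx
    rw [hd x hx]
    have hxα : x ^ (α - 1) = x ^ α / x := by
      rw [Real.rpow_sub hx, Real.rpow_one]
    rw [hxα]
    have hx0 : x ≠ 0 := hx.ne'
    field_simp
    ring
  -- d x + a → ∞
  have htop : Tendsto (fun x : ℝ => d x + a) atTop atTop := by
    have := Filter.Tendsto.atTop_mul_pos hcpos tendsto_id hratio
    refine this.congr' ?_
    filter_upwards [eventually_gt_atTop (0:ℝ)] with x hx
    field_simp
    rw [id_eq]; ring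
  -- main ratio limit
  have hL : (0:ℝ) < (1 - α) * θ ^ (1 - α) :=
    mul_pos hα1 (Real.rpow_pos_of_pos hθ _)
  have hmain : Tendsto (fun x : ℝ => (x - θ) / (d x + a)) atTop
      (𝓝 ((1 - α) * θ ^ (1 - α))) := by
    have hnum : Tendsto (fun x : ℝ => (x - θ) / x) atTop (𝓝 1) := by
      have : Tendsto (fun x : ℝ => 1 - θ * x⁻¹) atTop (𝓝 (1 - θ * 0)) :=
        tendsto_const_nhds.sub (h2.const_mul _)
      simp only [mul_zero, sub_zero] at this
      refine this.congr' ?_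
      filter_upwards [eventually_gt_atTop (0:ℝ)] with x hx
      field_simp
    have hdiv : Tendsto (fun x : ℝ => ((x - θ) / x) / ((d x + a) / x)) atTop
        (𝓝 (1 / c)) := hnum.div hratio hcpos.ne'
    have hval : 1 / c = (1 - α) * θ ^ (1 - α) := by
      rw [hc]
      rw [show (1 : ℝ) - α = -(α - 1) by ring, Real.rpow_neg hθ.le]
      field_simp
    rw [hval] at hdiv
    refine hdiv.congr' ?_
    filter_upwards [eventually_gt_atTop (0:ℝ), htop.eventually_gt_atTop 0] with x hx hdx
    rw [div_div_div_cancel_right₀]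
    exact hx.ne'
  refine ⟨?_, hmain, ?_⟩
  · intro β hβ
    have hpow : Tendsto (fun x : ℝ => (d x + a) ^ β) atTop (𝓝 0) := by
      have := (tendsto_rpow_neg_atTop (by linarith : (0:ℝ) < -β)).comp htop
      simpa [Function.comp_def] using this
    have hprod := hmain.mul hpow
    rw [mul_zero] at hprod
    refine hprod.congr' ?_
    filter_upwards [htop.eventually_gt_atTop 0] with x hdx
    have hb : (d x + a) ^ (1 - β) = (d x + a) * ((d x + a) ^ β)⁻¹ := by
      rw [show (1:ℝ) - β = 1 + (-β) by ring, Real.rpow_add hdx, Real.rpow_one,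
        Real.rpow_neg hdx.le]
    rw [hb]
    have hbp : (0:ℝ) < (d x + a) ^ β := Real.rpow_pos_of_pos hdx _
    field_simp
  · intro β hβ
    have hpow : Tendsto (fun x : ℝ => (d x + a) ^ β) atTop atTop :=
      (tendsto_rpow_atTop hβ).comp htop
    have hprod := Filter.Tendsto.pos_mul_atTop hL hmain hpow
    refine hprod.congr' ?_
    filter_upwards [htop.eventually_gt_atTop 0] with x hdx
    have hb : (d x + a) ^ (1 - β) = (d x + a) * ((d x + a) ^ β)⁻¹ := by
      rw [show (1:ℝ) - β = 1 + (-β) by ring, Real.rpow_add hdx, Real.rpow_one,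
        Real.rpow_neg hdx.le]
    rw [hb]
    have hbp : (0:ℝ) < (d x + a) ^ β := Real.rpow_pos_of_pos hdx _
    field_simp
end

section
/- (Robustness classification for the Itakura–Saito divergence under the power mean.) Fix θ > 0, a ≥ 0, and define the Itakura–Saito divergence d(x, θ) = x/θ − ln(x/θ) − 1 for x > 0. Then, as x → +∞: (i) if β < 0, then (x − θ)/(d(x, θ) + a)^{1−β} → 0; (ii) if β = 0, then (x − θ)/(d(x, θ) + a) → θ (a finite positive limit); (iii) if β > 0, then (x − θ)/(d(x, θ) + a)^{1−β} → +∞. -/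
open Filter Topology

/-- Robustness classification for the Itakura–Saito divergence under the power
mean: as `x → ∞`, the influence factor `(x − θ)/(d(x, θ) + a)^(1−β)` is
redescending for `β < 0`, bounded with limit `θ` for `β = 0`, and divergent for
`β > 0`. -/
theorem itakura_saito_influence_classification
    (θ a : ℝ) (hθ : 0 < θ) (ha : 0 ≤ a)
    (d : ℝ → ℝ)
    (hd : ∀ x : ℝ, 0 < x → d x = x / θ - Real.log (x / θ) - 1) :
    (∀ β : ℝ, β < 0 →
      Tendsto (fun x : ℝ => (x - θ) / (d x + a) ^ (1 - β)) atTop (𝓝 0)) ∧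
    Tendsto (fun x : ℝ => (x - θ) / (d x + a)) atTop (𝓝 θ) ∧
    (∀ β : ℝ, 0 < β →
      Tendsto (fun x : ℝ => (x - θ) / (d x + a) ^ (1 - β)) atTop atTop) := by
  -- eventually x is positive and larger than θ
  have hev : ∀ᶠ x : ℝ in atTop, 0 < x ∧ θ < x := by
    filter_upwards [eventually_gt_atTop (0 : ℝ), eventually_gt_atTop θ] with x h1 h2
    exact ⟨h1, h2⟩
  -- eventually d x + a > 0
  have hgpos : ∀ᶠ x : ℝ in atTop, 0 < d x + a := by
    filter_upwards [hev] with x ⟨hx, hxθ⟩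
    have ht : (0:ℝ) < x / θ := div_pos hx hθ
    have ht1 : x / θ ≠ 1 := by
      have : (1:ℝ) < x / θ := (one_lt_div hθ).2 hxθ
      exact (ne_of_gt this)
    have hlog : Real.log (x / θ) < x / θ - 1 := Real.log_lt_sub_one_of_pos ht ht1
    rw [hd x hx]
    linarith
  -- log x / x → 0
  have hlogx : Tendsto (fun x : ℝ => Real.log x / x) atTop (𝓝 0) := by
    have := Real.tendsto_pow_log_div_mul_add_atTop 1 0 1 one_ne_zero
    simpa using this
  -- (d x + a)/x → θ⁻¹
  have hrat : Tendsto (fun x : ℝ => (d x + a) / x) atTop (𝓝 θ⁻¹) := by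
    have hc : Tendsto (fun x : ℝ => (Real.log θ - 1 + a) / x) atTop (𝓝 0) :=
      Tendsto.div_atTop tendsto_const_nhds tendsto_id
    have h1 : Tendsto (fun x : ℝ => θ⁻¹ - Real.log x / x + (Real.log θ - 1 + a) / x)
        atTop (𝓝 (θ⁻¹ - 0 + 0)) := (tendsto_const_nhds.sub hlogx).add hc
    rw [sub_zero, add_zero] at h1
    refine h1.congr' ?_
    filter_upwards [hev] with x ⟨hx, _⟩
    rw [hd x hx, Real.log_div (ne_of_gt hx) (ne_of_gt hθ)]
    field_simp
    ring
  -- (x - θ)/x → 1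
  have hxr : Tendsto (fun x : ℝ => (x - θ) / x) atTop (𝓝 1) := by
    have hc : Tendsto (fun x : ℝ => θ / x) atTop (𝓝 0) :=
      Tendsto.div_atTop tendsto_const_nhds tendsto_id
    have h1 : Tendsto (fun x : ℝ => 1 - θ / x) atTop (𝓝 (1 - 0)) :=
      tendsto_const_nhds.sub hc
    rw [sub_zero] at h1
    refine h1.congr' ?_
    filter_upwards [eventually_ne_atTop (0:ℝ)] with x hx
    field_simp
  have hθinv : (0:ℝ) < θ⁻¹ := inv_pos.2 hθ
  -- constant part limit: ((x-θ)/x) * ((d x + a)/x)^(β-1) → (θ⁻¹)^(β-1)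
  have hconst : ∀ β : ℝ, Tendsto
      (fun x : ℝ => (x - θ) / x * ((d x + a) / x) ^ (β - 1)) atTop
      (𝓝 (θ⁻¹ ^ (β - 1))) := by
    intro β
    have h2 : Tendsto (fun x : ℝ => ((d x + a) / x) ^ (β - 1)) atTop
        (𝓝 (θ⁻¹ ^ (β - 1))) :=
      hrat.rpow tendsto_const_nhds (Or.inl (ne_of_gt hθinv))
    simpa using hxr.mul h2
  -- key algebraic identity, eventually
  have hkey : ∀ β : ℝ, ∀ᶠ x : ℝ in atTop,
      (x - θ) / (d x + a) ^ (1 - β)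
        = (x - θ) / x * ((d x + a) / x) ^ (β - 1) * x ^ β := by
    intro β
    filter_upwards [hev, hgpos] with x ⟨hx, _⟩ hg
    have hgx : (0:ℝ) ≤ (d x + a) / x := le_of_lt (div_pos hg hx)
    have h1 : ((d x + a) / x) ^ (β - 1) * x ^ (β - 1) = (d x + a) ^ (β - 1) := by
      rw [← Real.mul_rpow hgx (le_of_lt hx), div_mul_cancel₀ _ (ne_of_gt hx)]
    have h2 : x ^ (β:ℝ) = x ^ (β - 1) * x := by
      rw [Real.rpow_sub hx, Real.rpow_one, div_mul_cancel₀ _ (ne_of_gt hx)]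
    have h3 : (d x + a) ^ (β - 1) = ((d x + a) ^ (1 - β))⁻¹ := by
      rw [← Real.rpow_neg (le_of_lt hg)]
      ring_nf
    calc (x - θ) / (d x + a) ^ (1 - β)
        = (x - θ) * ((d x + a) ^ (1 - β))⁻¹ := div_eq_mul_inv _ _
      _ = (x - θ) * (d x + a) ^ (β - 1) := by rw [h3]
      _ = (x - θ) * (((d x + a) / x) ^ (β - 1) * x ^ (β - 1)) := by rw [h1]
      _ = (x - θ) / x * ((d x + a) / x) ^ (β - 1) * (x ^ (β - 1) * x) := by
          field_simp
      _ = (x - θ) / x * ((d x + a) / x) ^ (β - 1) * x ^ β := by rw [← h2]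
  refine ⟨?_, ?_, ?_⟩
  · -- β < 0 : redescending
    intro β hβ
    have hx0 : Tendsto (fun x : ℝ => (x:ℝ) ^ β) atTop (𝓝 0) := by
      have := tendsto_rpow_neg_atTop (neg_pos.2 hβ)
      simpa using this
    have := (hconst β).mul hx0
    rw [mul_zero] at this
    exact this.congr' (Filter.EventuallyEq.symm (hkey β))
  · -- β = 0 : bounded, limit θ
    have h := hxr.div hrat (ne_of_gt hθinv)
    have hval : (1:ℝ) / θ⁻¹ = θ := by field_simp
    rw [hval] at h
    refine h.congr' ?_
    filter_upwards [eventually_ne_atTop (0:ℝ), hgpos] with x hx hg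
    simp only [Pi.div_apply]
    rw [div_div_div_eq]
    rw [mul_comm x (d x + a), mul_div_mul_right _ _ hx]
  · -- β > 0 : divergent
    intro β hβ
    have hx0 : Tendsto (fun x : ℝ => (x:ℝ) ^ β) atTop atTop := tendsto_rpow_atTop hβ
    have hcpos : (0:ℝ) < θ⁻¹ ^ (β - 1) := Real.rpow_pos_of_pos hθinv _
    have := Filter.Tendsto.pos_mul_atTop hcpos (hconst β) hx0
    exact this.congr' (Filter.EventuallyEq.symm (hkey β))
end

section
/- (Robustness classification for the generalized Kullback–Leibler divergence under the power mean.) Fix θ > 0, a ≥ 0, and define d(x, θ) = x ln(x/θ) − (x − θ) for x > 0. Then, as x → +∞: (i) if β ≤ 0, then (x − θ)/(d(x, θ) + a)^{1−β} → 0 (the influence is redescending); (ii) if β > 0, then (x − θ)/(d(x, θ) + a)^{1−β} → +∞ (the influence is divergent). -/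
open Filter Topology

/-- Robustness classification for the generalized Kullback–Leibler divergence
under the power mean: as `x → ∞`, the influence factor
`(x − θ)/(d(x, θ) + a)^(1−β)` is redescending for `β ≤ 0` and divergent for
`β > 0`. -/
theorem generalized_KL_influence_classification
    (θ a : ℝ) (hθ : 0 < θ) (ha : 0 ≤ a)
    (d : ℝ → ℝ)
    (hd : ∀ x : ℝ, 0 < x → d x = x * Real.log (x / θ) - (x - θ)) :
    (∀ β : ℝ, β ≤ 0 →
      Tendsto (fun x : ℝ => (x - θ) / (d x + a) ^ (1 - β)) atTop (𝓝 0)) ∧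
    (∀ β : ℝ, 0 < β →
      Tendsto (fun x : ℝ => (x - θ) / (d x + a) ^ (1 - β)) atTop atTop) := by
  have hlogdiv : Tendsto (fun x : ℝ => Real.log (x / θ)) atTop atTop :=
    Real.tendsto_log_atTop.comp (tendsto_id.atTop_div_const hθ)
  have hx0 : ∀ᶠ x : ℝ in atTop, 0 < x := eventually_gt_atTop 0
  have hlog2 : ∀ᶠ x : ℝ in atTop, 2 ≤ Real.log (x / θ) := hlogdiv.eventually_ge_atTop 2
  have hbase : ∀ᶠ x : ℝ in atTop, 1 ≤ d x + a := by
    filter_upwards [hx0, hlog2, eventually_ge_atTop (1:ℝ)] with x hx hl h1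
    rw [hd x hx]
    nlinarith
  have hquot : Tendsto (fun x : ℝ => (d x + a) / (x - θ)) atTop atTop := by
    refine tendsto_atTop_mono' atTop ?_
      (tendsto_atTop_add_const_right _ (-1) hlogdiv)
    filter_upwards [hx0, hlog2, eventually_gt_atTop θ] with x hx hl hxθ
    rw [le_div_iff₀ (by linarith : (0:ℝ) < x - θ), hd x hx]
    nlinarith
  constructor
  · intro β hβ
    have h1β : (1:ℝ) ≤ 1 - β := by linarith
    refine squeeze_zero' ?_ ?_ hquot.inv_tendsto_atTop
    · filter_upwards [hbase, eventually_ge_atTop θ] with x hb hxθ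
      exact div_nonneg (by linarith) (Real.rpow_nonneg (by linarith) _)
    · filter_upwards [hbase, eventually_gt_atTop θ] with x hb hxθ
      simp only [Pi.inv_apply, inv_div]
      have h1 : d x + a ≤ (d x + a) ^ (1 - β) := by
        calc d x + a = (d x + a) ^ (1:ℝ) := (Real.rpow_one _).symm
        _ ≤ (d x + a) ^ (1 - β) := Real.rpow_le_rpow_of_exponent_le hb h1β
      gcongr
  · intro β hβ
    rcases le_or_gt 1 β with hβ1 | hβ1
    · -- β ≥ 1
      refine tendsto_atTop_mono' atTop ?_
        (tendsto_atTop_add_const_right _ (-θ) tendsto_id)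
      filter_upwards [hbase, eventually_ge_atTop θ] with x hb hxθ
      have ht1 : (d x + a) ^ (1 - β) ≤ 1 :=
        Real.rpow_le_one_of_one_le_of_nonpos hb (by linarith)
      have ht0 : 0 < (d x + a) ^ (1 - β) :=
        Real.rpow_pos_of_pos (by linarith) _
      rw [le_div_iff₀ ht0]
      simp only [id_eq]
      nlinarith
    · -- 0 < β < 1
      set e : ℝ := (1 + β / 2) * (1 - β) with he_def
      have he1 : e < 1 := by nlinarith
      have he0 : 0 ≤ e := by nlinarith
      have hlogO := (isLittleO_log_rpow_atTop (by linarith : 0 < β / 2)).bound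
        (by norm_num : (0:ℝ) < 1/2)
      have hrp : Tendsto (fun x : ℝ => x ^ (β/2)) atTop atTop :=
        tendsto_rpow_atTop (by linarith)
      have hθr : ∀ᶠ x : ℝ in atTop, -Real.log θ ≤ (1/2) * x ^ (β/2) := by
        filter_upwards [hrp.eventually_ge_atTop (2 * (-Real.log θ))] with x hx
        linarith
      have hdle : ∀ᶠ x : ℝ in atTop, d x + a ≤ x ^ ((1:ℝ) + β/2) := by
        filter_upwards [hx0, hlogO, hθr, eventually_ge_atTop (1:ℝ),
          eventually_ge_atTop (θ + a), hlog2] with x hx hlo hθx h1 hxa hl2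
        have hlogx : Real.log (x / θ) = Real.log x - Real.log θ :=
          Real.log_div hx.ne' hθ.ne'
        have habs : Real.log x ≤ (1/2) * x ^ (β/2) := by
          rw [Real.norm_eq_abs, Real.norm_eq_abs,
            abs_of_nonneg (Real.log_nonneg h1),
            abs_of_nonneg (Real.rpow_nonneg (by linarith) _)] at hlo
          linarith
        have hloglt : Real.log (x / θ) ≤ x ^ (β/2) := by
          rw [hlogx]; linarith
        have hstep : d x + a ≤ x * x ^ (β/2) := by
          rw [hd x hx]
          have h2 : x * Real.log (x / θ) ≤ x * x ^ (β/2) :=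
            mul_le_mul_of_nonneg_left hloglt (by linarith)
          linarith
        calc d x + a ≤ x * x ^ (β/2) := hstep
        _ = x ^ ((1:ℝ) + β/2) := by
          rw [Real.rpow_add hx, Real.rpow_one]
      refine tendsto_atTop_mono' atTop ?_
        ((tendsto_rpow_atTop (by linarith : 0 < 1 - e)).atTop_div_const two_pos)
      filter_upwards [hx0, hbase, hdle, eventually_ge_atTop (2*θ)] with x hx hb hdx h2θ
      have hxe : (0:ℝ) < x ^ e := Real.rpow_pos_of_pos hx _
      have hup : (d x + a) ^ (1 - β) ≤ x ^ e := by
        calc (d x + a) ^ (1 - β) ≤ (x ^ ((1:ℝ) + β/2)) ^ (1 - β) :=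
          Real.rpow_le_rpow (by linarith) hdx (by linarith)
        _ = x ^ e := by rw [← Real.rpow_mul hx.le]
      have hrp0 : 0 < (d x + a) ^ (1 - β) := Real.rpow_pos_of_pos (by linarith) _
      calc x ^ (1 - e) / 2 = (x / 2) / x ^ e := by
            rw [Real.rpow_sub hx, Real.rpow_one]; ring
        _ ≤ (x - θ) / x ^ e := by gcongr; linarith
        _ ≤ (x - θ) / (d x + a) ^ (1 - β) := by
            gcongr
            linarith
end

section
/- (Robustness classification for α-divergence with α > 1 under the power mean.) Fix real α > 1, θ > 0, a ≥ 0, and define d_α(x, θ) = (x^α + (α − 1)θ^α − α x θ^{α−1})/(α(α − 1)) for x > 0. Then, as x → +∞: (i) if β < 1 − 1/α, then (x − θ)/(d_α(x, θ) + a)^{1−β} → 0; (ii) if β = 1 − 1/α, then (x − θ)/(d_α(x, θ) + a)^{1−β} → (α(α − 1))^{1/α} (a finite positive limit); (iii) if β > 1 − 1/α, then (x − θ)/(d_α(x, θ) + a)^{1−β} → +∞. -/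
open Filter Topology

/-- Robustness classification for the α-divergence with `α > 1` under the power
mean: as `x → ∞`, the influence factor `(x − θ)/(d_α(x, θ) + a)^(1−β)` is
redescending for `β < 1 − 1/α`, bounded with limit `(α(α − 1))^(1/α)` for
`β = 1 − 1/α`, and divergent for `β > 1 − 1/α`. -/
theorem alpha_divergence_influence_classification_alpha_gt_one
    (α θ a : ℝ) (hα : 1 < α) (hθ : 0 < θ) (ha : 0 ≤ a)
    (d : ℝ → ℝ)
    (hd : ∀ x : ℝ, 0 < x →
      d x = (x ^ α + (α - 1) * θ ^ α - α * x * θ ^ (α - 1)) / (α * (α - 1))) :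
    (∀ β : ℝ, β < 1 - 1 / α →
      Tendsto (fun x : ℝ => (x - θ) / (d x + a) ^ (1 - β)) atTop (𝓝 0)) ∧
    (∀ β : ℝ, β = 1 - 1 / α →
      Tendsto (fun x : ℝ => (x - θ) / (d x + a) ^ (1 - β)) atTop
        (𝓝 ((α * (α - 1)) ^ (1 / α)))) ∧
    (∀ β : ℝ, 1 - 1 / α < β →
      Tendsto (fun x : ℝ => (x - θ) / (d x + a) ^ (1 - β)) atTop atTop) := by
  have hα0 : (0 : ℝ) < α := lt_trans one_pos hα
  have hα1 : (0 : ℝ) < α - 1 := sub_pos.mpr hα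
  have hc : (0 : ℝ) < α * (α - 1) := mul_pos hα0 hα1
  set c : ℝ := α * (α - 1) with hcdef
  set L : ℝ := c⁻¹ with hLdef
  have hL : (0 : ℝ) < L := inv_pos.mpr hc
  set g : ℝ → ℝ := fun x => (d x + a) / x ^ α with hgdef
  -- g tends to L
  have hg : Tendsto g atTop (𝓝 L) := by
    have h1 : Tendsto (fun x : ℝ => x ^ (-α)) atTop (𝓝 0) :=
      tendsto_rpow_neg_atTop hα0
    have h2 : Tendsto (fun x : ℝ => x ^ (-(α - 1))) atTop (𝓝 0) :=
      tendsto_rpow_neg_atTop hα1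
    have hmain : Tendsto (fun x : ℝ =>
        L + ((α - 1) * θ ^ α * L + a) * x ^ (-α)
          - θ ^ (α - 1) / (α - 1) * x ^ (-(α - 1))) atTop
        (𝓝 (L + ((α - 1) * θ ^ α * L + a) * 0 - θ ^ (α - 1) / (α - 1) * 0)) := by
      exact ((tendsto_const_nhds.add (h1.const_mul _)).sub (h2.const_mul _))
    rw [show L + ((α - 1) * θ ^ α * L + a) * 0 - θ ^ (α - 1) / (α - 1) * 0 = L by ring]
      at hmain
    refine hmain.congr' ?_
    filter_upwards [eventually_gt_atTop (0 : ℝ)] with x hx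
    have hxα : (0 : ℝ) < x ^ α := Real.rpow_pos_of_pos hx α
    have hxne : x ^ α ≠ 0 := ne_of_gt hxα
    have hneg : x ^ (-α) = (x ^ α)⁻¹ := Real.rpow_neg hx.le α
    have hneg1 : x ^ (-(α - 1)) = x / x ^ α := by
      rw [show -(α - 1) = 1 - α by ring, Real.rpow_sub hx, Real.rpow_one]
    simp only [g, hd x hx, hLdef, hcdef]
    rw [hneg, hneg1, div_eq_mul_inv x]
    field_simp
    ring
  have hgpos : ∀ᶠ x in atTop, 0 < g x := hg.eventually (eventually_gt_nhds hL)
  -- key eventual equality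
  have hkey : ∀ β : ℝ, (fun x : ℝ => (x - θ) / (d x + a) ^ (1 - β)) =ᶠ[atTop]
      fun x : ℝ => x ^ (1 - α + α * β) * ((1 - θ / x) * g x ^ (β - 1)) := by
    intro β
    filter_upwards [eventually_gt_atTop (0 : ℝ), hgpos] with x hx hgx
    have hxα : (0 : ℝ) < x ^ α := Real.rpow_pos_of_pos hx α
    have hda : d x + a = x ^ α * g x := by
      rw [mul_div_assoc']; exact (mul_div_cancel_left₀ _ hxα.ne').symm
    rw [hda, Real.mul_rpow hxα.le hgx.le, ← Real.rpow_mul hx.le]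
    have h1 : x - θ = x * (1 - θ / x) := by field_simp
    have h2 : x ^ (1 - α + α * β) = x * (x ^ (α * (1 - β)))⁻¹ := by
      rw [show (1 : ℝ) - α + α * β = 1 + -(α * (1 - β)) by ring,
        Real.rpow_add hx, Real.rpow_one, Real.rpow_neg hx.le]
    have h3 : g x ^ (β - 1) = (g x ^ (1 - β))⁻¹ := by
      rw [show β - 1 = -(1 - β) by ring, Real.rpow_neg hgx.le]
    rw [h1, h2, h3]
    ring
  -- the bounded factor
  have hM : ∀ β : ℝ, Tendsto (fun x : ℝ => (1 - θ / x) * g x ^ (β - 1)) atTop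
      (𝓝 (L ^ (β - 1))) := by
    intro β
    have h1 : Tendsto (fun x : ℝ => 1 - θ / x) atTop (𝓝 1) := by
      have h0 : Tendsto (fun x : ℝ => (1 : ℝ) - θ * x⁻¹) atTop (𝓝 (1 - θ * 0)) :=
        tendsto_const_nhds.sub (tendsto_inv_atTop_zero.const_mul θ)
      simpa [div_eq_mul_inv] using h0
    have h2 : Tendsto (fun x : ℝ => g x ^ (β - 1)) atTop (𝓝 (L ^ (β - 1))) :=
      (Real.continuousAt_rpow_const L (β - 1) (Or.inl hL.ne')).tendsto.comp hg
    simpa using h1.mul h2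
  have hMpos : ∀ β : ℝ, (0 : ℝ) < L ^ (β - 1) := fun β => Real.rpow_pos_of_pos hL _
  refine ⟨?_, ?_, ?_⟩
  · -- redescending case
    intro β hβ
    have hγ : 1 - α + α * β < 0 := by
      have : α * β < α * (1 - 1 / α) := by
        exact (mul_lt_mul_iff_right₀ hα0).mpr hβ
      rw [mul_sub, mul_one_div, div_self hα0.ne'] at this
      linarith
    have hx0 : Tendsto (fun x : ℝ => x ^ (1 - α + α * β)) atTop (𝓝 0) := by
      have := tendsto_rpow_neg_atTop (neg_pos.mpr hγ)
      simpa using this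
    have := hx0.mul (hM β)
    rw [zero_mul] at this
    exact this.congr' (hkey β).symm
  · -- boundary case
    intro β hβ
    have hγ : 1 - α + α * β = 0 := by
      rw [hβ]; field_simp; ring
    have hval : L ^ (β - 1) = (α * (α - 1)) ^ (1 / α) := by
      rw [hLdef, hcdef, show β - 1 = -(1 / α) by rw [hβ]; ring, Real.inv_rpow hc.le,
        Real.rpow_neg hc.le, inv_inv]
    have hM' := hM β
    rw [hval] at hM'
    refine hM'.congr' ?_
    filter_upwards [hkey β, eventually_gt_atTop (0 : ℝ)] with x hx hx0
    rw [hx, hγ, Real.rpow_zero, one_mul]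
  · -- divergent case
    intro β hβ
    have hγ : 0 < 1 - α + α * β := by
      have : α * (1 - 1 / α) < α * β := (mul_lt_mul_iff_right₀ hα0).mpr hβ
      rw [mul_sub, mul_one_div, div_self hα0.ne'] at this
      linarith
    have hx0 : Tendsto (fun x : ℝ => x ^ (1 - α + α * β)) atTop atTop :=
      tendsto_rpow_atTop hγ
    have := hx0.atTop_mul_pos (hMpos β) (hM β)
    exact this.congr' (hkey β).symm
end

section
/- (Influence limits for the exp-loss Bregman divergence under the power mean.) Fix θ ∈ ℝ, a ≥ 0, and define d(x, θ) = e^x − e^θ − e^θ(x − θ) for x ∈ ℝ (the Bregman divergence generated by φ(x) = e^x). Then: (i) for every β < 1, lim_{x → +∞} (x − θ)/(d(x, θ) + a)^{1−β} = 0; (ii) for β = 0, lim_{x → −∞} (x − θ)/(d(x, θ) + a) = −e^{−θ} (a finite nonzero limit, so the influence is bounded but not redescending in this direction); (iii) for every β < 0, lim_{x → −∞} (x − θ)/(d(x, θ) + a)^{1−β} = 0. -/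
open Filter Topology

/-- Influence limits for the exp-loss Bregman divergence
`d(x, θ) = e^x − e^θ − e^θ(x − θ)` under the power mean: the influence factor
`(x − θ)/(d(x, θ) + a)^(1−β)` tends to `0` as `x → +∞` for every `β < 1`;
as `x → −∞` it tends to `−e^{−θ}` when `β = 0` and to `0` for every `β < 0`. -/
theorem exp_loss_influence_limits
    (θ a : ℝ) (ha : 0 ≤ a)
    (d : ℝ → ℝ)
    (hd : ∀ x : ℝ, d x = Real.exp x - Real.exp θ - Real.exp θ * (x - θ)) :
    (∀ β : ℝ, β < 1 →
      Tendsto (fun x : ℝ => (x - θ) / (d x + a) ^ (1 - β)) atTop (𝓝 0)) ∧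
    Tendsto (fun x : ℝ => (x - θ) / (d x + a)) atBot (𝓝 (-Real.exp (-θ))) ∧
    (∀ β : ℝ, β < 0 →
      Tendsto (fun x : ℝ => (x - θ) / (d x + a) ^ (1 - β)) atBot (𝓝 0)) := by
  have h1 : Tendsto (fun x : ℝ => Real.exp (-x)) atTop (𝓝 0) :=
    Real.tendsto_exp_neg_atTop_nhds_zero
  have h2 : Tendsto (fun x : ℝ => x * Real.exp (-x)) atTop (𝓝 0) := by
    simpa using Real.tendsto_pow_mul_exp_neg_atTop_nhds_zero 1
  -- (d x + a) * exp (-x) → 1 at +∞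
  have L1 : Tendsto (fun x : ℝ => (d x + a) * Real.exp (-x)) atTop (𝓝 1) := by
    have key : Tendsto (fun x : ℝ =>
        1 - Real.exp θ * Real.exp (-x)
          - Real.exp θ * (x * Real.exp (-x) - θ * Real.exp (-x))
          + a * Real.exp (-x)) atTop (𝓝 1) := by
      have := (((tendsto_const_nhds : Tendsto (fun _ : ℝ => (1:ℝ)) atTop (𝓝 1)).sub
        (h1.const_mul (Real.exp θ))).sub
        (((h2.sub (h1.const_mul θ))).const_mul (Real.exp θ))).add (h1.const_mul a)
      simpa using this
    refine key.congr fun x => ?_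
    rw [hd x, Real.exp_neg]
    have hx := Real.exp_ne_zero x
    field_simp
  -- Part (ii): the atBot limit for β = 0
  have h3 : Tendsto (fun x : ℝ => x⁻¹) atBot (𝓝 0) := by
    have := ((tendsto_inv_atTop_zero : Tendsto (fun x : ℝ => x⁻¹) atTop (𝓝 0)).comp tendsto_neg_atBot_atTop).neg
    simpa [Function.comp, inv_neg] using this
  have hnum : Tendsto (fun x : ℝ => (x - θ) * x⁻¹) atBot (𝓝 1) := by
    have base : Tendsto (fun x : ℝ => 1 - θ * x⁻¹) atBot (𝓝 1) := by
      simpa using tendsto_const_nhds.sub (h3.const_mul θ)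
    refine base.congr' ?_
    filter_upwards [eventually_lt_atBot (0 : ℝ)] with x hx
    have hx0 : x ≠ 0 := ne_of_lt hx
    field_simp
  have hden : Tendsto (fun x : ℝ => (d x + a) * x⁻¹) atBot (𝓝 (-Real.exp θ)) := by
    have base : Tendsto (fun x : ℝ =>
        Real.exp x * x⁻¹ - Real.exp θ * x⁻¹ - Real.exp θ * (1 - θ * x⁻¹) + a * x⁻¹)
        atBot (𝓝 (-Real.exp θ)) := by
      have := ((((Real.tendsto_exp_atBot.mul h3).sub (h3.const_mul (Real.exp θ))).sub
        (((tendsto_const_nhds : Tendsto (fun _ : ℝ => (1:ℝ)) atBot (𝓝 1)).sub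
          (h3.const_mul θ)).const_mul (Real.exp θ))).add
        (h3.const_mul a))
      have e : (0:ℝ) * 0 - Real.exp θ * 0 - Real.exp θ * (1 - θ * 0) + a * 0
          = -Real.exp θ := by ring
      simpa [e] using this
    refine base.congr' ?_
    filter_upwards [eventually_lt_atBot (0 : ℝ)] with x hx
    have hx0 : x ≠ 0 := ne_of_lt hx
    rw [hd x]
    field_simp
  have L2 : Tendsto (fun x : ℝ => (x - θ) / (d x + a)) atBot (𝓝 (-Real.exp (-θ))) := by
    have hne : (-Real.exp θ) ≠ 0 := neg_ne_zero.mpr (Real.exp_ne_zero θ)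
    have := hnum.div hden hne
    have e : (1 : ℝ) / (-Real.exp θ) = -Real.exp (-θ) := by
      rw [Real.exp_neg]; field_simp
    rw [e] at this
    refine this.congr' ?_
    filter_upwards [eventually_lt_atBot (0 : ℝ)] with x hx
    have hx0 : x⁻¹ ≠ 0 := inv_ne_zero (ne_of_lt hx)
    simp only [Pi.div_apply]
    rw [mul_div_mul_right _ _ hx0]
  -- d x + a → +∞ at −∞
  have hdtop : Tendsto (fun x : ℝ => d x + a) atBot atTop := by
    have hg : Tendsto (fun x : ℝ => Real.exp θ * (-x) + (Real.exp θ * θ - Real.exp θ + a))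
        atBot atTop :=
      tendsto_atTop_add_const_right _ _ (tendsto_neg_atBot_atTop.const_mul_atTop (Real.exp_pos θ))
    refine tendsto_atTop_mono (fun x => ?_) hg
    rw [hd x]
    nlinarith [Real.exp_pos x]
  refine ⟨?_, L2, ?_⟩
  · -- Part (i)
    intro β hβ
    set c : ℝ := 1 - β with hc
    have hc0 : 0 < c := by simp [hc]; linarith
    have hA : Tendsto (fun x : ℝ => (x - θ) * Real.exp (-(c * x))) atTop (𝓝 0) := by
      have hcx : Tendsto (fun x : ℝ => c * x) atTop atTop :=
        tendsto_id.const_mul_atTop hc0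
      have hu : Tendsto (fun u : ℝ => (1 / c) * (u * Real.exp (-u)) - θ * Real.exp (-u))
          atTop (𝓝 0) := by
        simpa using (h2.const_mul (1 / c)).sub (h1.const_mul θ)
      have := hu.comp hcx
      refine this.congr fun x => ?_
      simp only [Function.comp]
      field_simp
    have hB : Tendsto (fun x : ℝ => ((d x + a) * Real.exp (-x))⁻¹ ^ c) atTop (𝓝 1) := by
      have := (L1.inv₀ one_ne_zero).rpow_const (p := c) (Or.inl (by norm_num))
      simpa using this
    have := hA.mul hB
    rw [zero_mul] at this
    refine this.congr' ?_
    have hpos : ∀ᶠ x : ℝ in atTop, 0 < d x + a := by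
      have := L1.eventually (eventually_gt_nhds (by norm_num : (0:ℝ) < 1))
      filter_upwards [this] with x hx
      nlinarith [Real.exp_pos (-x)]
    filter_upwards [hpos] with x hx
    rw [mul_inv, Real.mul_rpow (by positivity) (by positivity),
      ← Real.exp_neg, neg_neg, ← Real.exp_mul, Real.inv_rpow hx.le, div_eq_mul_inv]
    have he : Real.exp (-(c * x)) * Real.exp (x * c) = 1 := by
      rw [← Real.exp_add, show -(c * x) + x * c = 0 by ring, Real.exp_zero]
    calc (x - θ) * Real.exp (-(c * x)) * (((d x + a) ^ c)⁻¹ * Real.exp (x * c))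
        = (x - θ) * ((d x + a) ^ c)⁻¹ * (Real.exp (-(c * x)) * Real.exp (x * c)) := by ring
      _ = (x - θ) * ((d x + a) ^ c)⁻¹ := by rw [he, mul_one]
  · -- Part (iii)
    intro β hβ
    have hpow : Tendsto (fun x : ℝ => (d x + a) ^ β) atBot (𝓝 0) := by
      have := (tendsto_rpow_neg_atTop (by linarith : 0 < -β)).comp hdtop
      simpa [Function.comp_def, neg_neg] using this
    have := L2.mul hpow
    rw [mul_zero] at this
    refine this.congr' ?_
    filter_upwards [hdtop.eventually_gt_atTop 0] with x hx
    have h1 : (d x + a) ^ (1 - β) = (d x + a) * ((d x + a) ^ β)⁻¹ := by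
      rw [show (1 : ℝ) - β = 1 + (-β) by ring, Real.rpow_add hx, Real.rpow_one,
        Real.rpow_neg hx.le]
    rw [h1]
    have hb : (d x + a) ^ β ≠ 0 := (Real.rpow_pos_of_pos hx β).ne'
    field_simp
end

section
/- (Redescending influence for the total Bregman divergence; redescending direction of the total-Bregman robustness theorem.) Let E be a finite-dimensional real inner product space, φ: E → ℝ differentiable and strictly convex, c > 0, θ ∈ E, and tBD(x, θ) = d_φ(θ, x)/√(1 + c²‖∇φ(x)‖²) with d_φ(θ, x) = φ(θ) − φ(x) − ⟨θ − x, ∇φ(x)⟩. Let f: [0, ∞) → ℝ be differentiable with f' nonnegative, nonincreasing, and lim_{z→∞} f'(z) = 0. Assume tBD(x, θ) → ∞ as ‖x‖ → ∞. Then lim_{‖x‖→∞} f'(tBD(x, θ)) · ‖∇φ(x) − ∇φ(θ)‖ / √(1 + c²‖∇φ(x)‖²) = 0; that is, the influence function is redescending. -/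
open scoped RealInnerProductSpace
open Filter Topology

/-- The total Bregman divergence
`tBD(x, θ) = (φ(θ) − φ(x) − ⟨θ − x, ∇φ(x)⟩)/√(1 + c²‖∇φ(x)‖²)`. -/
noncomputable def tBD {E : Type*} [NormedAddCommGroup E] [InnerProductSpace ℝ E]
    [CompleteSpace E] (φ : E → ℝ) (c : ℝ) (x θ : E) : ℝ :=
  (φ θ - φ x - ⟪θ - x, gradient φ x⟫) / Real.sqrt (1 + c ^ 2 * ‖gradient φ x‖ ^ 2)

/-- Redescending influence for the total Bregman divergence: if `f'` is
nonnegative, nonincreasing, and tends to `0` at infinity, and `tBD(x, θ) → ∞`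
as `‖x‖ → ∞`, then the influence-function magnitude
`f'(tBD(x, θ)) ‖∇φ(x) − ∇φ(θ)‖/√(1 + c²‖∇φ(x)‖²)` tends to `0` as `‖x‖ → ∞`. -/
theorem total_bregman_influence_redescending
    {E : Type*} [NormedAddCommGroup E] [InnerProductSpace ℝ E]
    [FiniteDimensional ℝ E]
    (φ : E → ℝ) (hφdiff : Differentiable ℝ φ)
    (hφconv : StrictConvexOn ℝ Set.univ φ)
    (c : ℝ) (hc : 0 < c) (θ : E)
    (f : ℝ → ℝ) (hfdiff : DifferentiableOn ℝ f (Set.Ici 0))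
    (hf'nonneg : ∀ z ∈ Set.Ici (0 : ℝ), 0 ≤ derivWithin f (Set.Ici 0) z)
    (hf'anti : AntitoneOn (derivWithin f (Set.Ici 0)) (Set.Ici 0))
    (hf'lim : Tendsto (derivWithin f (Set.Ici 0)) atTop (𝓝 0))
    (htBD : Tendsto (fun x : E => tBD φ c x θ) (Filter.cocompact E) atTop) :
    Tendsto (fun x : E =>
        derivWithin f (Set.Ici 0) (tBD φ c x θ) *
          (‖gradient φ x - gradient φ θ‖ /
            Real.sqrt (1 + c ^ 2 * ‖gradient φ x‖ ^ 2)))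
      (Filter.cocompact E) (𝓝 0) := by
  set C : ℝ := 1 / c + ‖gradient φ θ‖ with hC
  have hC0 : 0 ≤ C := by positivity
  have hf'comp : Tendsto (fun x : E => derivWithin f (Set.Ici 0) (tBD φ c x θ))
      (Filter.cocompact E) (𝓝 0) := hf'lim.comp htBD
  have hbound : ∀ x : E,
      ‖gradient φ x - gradient φ θ‖ / Real.sqrt (1 + c ^ 2 * ‖gradient φ x‖ ^ 2) ≤ C := by
    intro x
    set s := Real.sqrt (1 + c ^ 2 * ‖gradient φ x‖ ^ 2) with hs
    have hs1 : 1 ≤ s := by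
      have h1 : (1:ℝ) ≤ 1 + c ^ 2 * ‖gradient φ x‖ ^ 2 := by
        nlinarith [mul_nonneg (sq_nonneg c) (sq_nonneg ‖gradient φ x‖)]
      calc (1:ℝ) = Real.sqrt 1 := by simp
        _ ≤ s := Real.sqrt_le_sqrt h1
    have hspos : 0 < s := lt_of_lt_of_le one_pos hs1
    have hgs : ‖gradient φ x‖ ≤ s / c := by
      rw [le_div_iff₀ hc]
      have h1 : (‖gradient φ x‖ * c) ^ 2 ≤ s ^ 2 := by
        rw [hs, Real.sq_sqrt (by positivity)]
        nlinarith [norm_nonneg (gradient φ x)]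
      nlinarith [norm_nonneg (gradient φ x), hc.le, hspos]
    rw [div_le_iff₀ hspos]
    calc ‖gradient φ x - gradient φ θ‖ ≤ ‖gradient φ x‖ + ‖gradient φ θ‖ :=
          norm_sub_le _ _
      _ ≤ s / c + ‖gradient φ θ‖ * s := by
          have : ‖gradient φ θ‖ * 1 ≤ ‖gradient φ θ‖ * s :=
            mul_le_mul_of_nonneg_left hs1 (norm_nonneg _)
          linarith
      _ = C * s := by rw [hC]; field_simp
  have hev : ∀ᶠ x : E in Filter.cocompact E, (0:ℝ) ≤ tBD φ c x θ :=
    htBD.eventually_ge_atTop 0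
  have hsq : Tendsto (fun x : E =>
      derivWithin f (Set.Ici 0) (tBD φ c x θ) * C) (Filter.cocompact E) (𝓝 0) := by
    simpa using hf'comp.mul_const C
  refine squeeze_zero' ?_ ?_ hsq
  · filter_upwards [hev] with x hx
    exact mul_nonneg (hf'nonneg _ hx) (by positivity)
  · filter_upwards [hev] with x hx
    exact mul_le_mul_of_nonneg_left (hbound x) (hf'nonneg _ hx)
end
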